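/- arXiv:1912.12989 — 7 statements merged into one kernel-verified Lean document; each statement's English description precedes it below -/
import Mathlib

section
/- Let Γ be a finite oriented graph (possibly with identifications making it periodic) and let ψ ∈ L²(Γ). If for every circuit C in the underlying undirected graph the integral over Γ of ψ(y)·χ_C(y) ds(y) vanishes, then there exists a continuous function φ on Γ, with φ ∈ H¹ on each edge, such that ∂_Γ φ = ψ almost everywhere on Γ. -/
open MeasureTheory

/-- A finite oriented metric graph: each edge `e` is identified with the
interval `[0, len e]` via an arc-length parametrization compatible with the
orientation, running from the vertex `src e` to the vertex `tgt e`. -/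
structure OrientedMetricGraph where
  V : Type
  E : Type
  fintV : Fintype V
  decV : DecidableEq V
  fintE : Fintype E
  decE : DecidableEq E
  src : E → V
  tgt : E → V
  len : E → ℝ
  len_pos : ∀ e, 0 < len e

attribute [instance] OrientedMetricGraph.fintV OrientedMetricGraph.decV
  OrientedMetricGraph.fintE OrientedMetricGraph.decE

namespace OrientedMetricGraph

variable (G : OrientedMetricGraph)

/-- A dart is an edge together with a direction of traversal
(`true` = following the orientation of the edge). -/
abbrev Dart := G.E × Bool

/-- The vertex where the traversal of the dart starts. -/
def dartTail (d : G.Dart) : G.V := if d.2 then G.src d.1 else G.tgt d.1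

/-- The vertex where the traversal of the dart ends. -/
def dartHead (d : G.Dart) : G.V := if d.2 then G.tgt d.1 else G.src d.1

/-- The orientation function `χ` on a dart: `+1` if the edge is traversed in
accordance with the orientation of the graph and `-1` otherwise. -/
def sign (d : G.Dart) : ℝ := if d.2 then 1 else -1

/-- Value of an edgewise function at the endpoint of the edge where the
traversal of the dart ends. -/
def headVal (u : G.E → ℝ → ℝ) (d : G.Dart) : ℝ :=
  if d.2 then u d.1 (G.len d.1) else u d.1 0

/-- Value of an edgewise function at the endpoint of the edge where the
traversal of the dart starts. -/
def tailVal (u : G.E → ℝ → ℝ) (d : G.Dart) : ℝ :=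
  if d.2 then u d.1 0 else u d.1 (G.len d.1)

/-- An edgewise function is continuous on the graph: its endpoint values agree
whenever two edge-endpoints are attached to the same vertex. -/
def VertexConsistent (u : G.E → ℝ → ℝ) : Prop :=
  ∀ d₁ d₂ : G.Dart, G.dartHead d₁ = G.dartHead d₂ → G.headVal u d₁ = G.headVal u d₂

/-- A trail: a nonempty walk (consecutive darts are incident) without repeated
edges. -/
def IsTrail (T : List G.Dart) : Prop :=
  T ≠ [] ∧ T.Chain' (fun d₁ d₂ => G.dartHead d₁ = G.dartTail d₂) ∧
    (T.map Prod.fst).Nodup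

/-- A circuit: a closed trail. -/
def IsCircuit (T : List G.Dart) : Prop :=
  G.IsTrail T ∧ ∀ dl ∈ T.getLast?, ∀ df ∈ T.head?, G.dartHead dl = G.dartTail df

/-- The signed integral of an edgewise function over one dart; the sign is the
value of the orientation function on the dart. -/
noncomputable def dartIntegral (g : G.E → ℝ → ℝ) (d : G.Dart) : ℝ :=
  G.sign d * ∫ s in (0:ℝ)..(G.len d.1), g d.1 s

/-- `∫_T g χ_T ds`: integral of `g` over a trail, weighted with the
orientation function of the trail. -/
noncomputable def trailIntegral (g : G.E → ℝ → ℝ) (T : List G.Dart) : ℝ :=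
  (T.map (G.dartIntegral g)).sum

/-- Undirected adjacency of two vertices. -/
def Adj (v w : G.V) : Prop := ∃ d : G.Dart, G.dartTail d = v ∧ G.dartHead d = w

/-- Directed adjacency of two vertices. -/
def DirAdj (v w : G.V) : Prop := ∃ e : G.E, G.src e = v ∧ G.tgt e = w

end OrientedMetricGraph

namespace OrientedMetricGraph

variable (G : OrientedMetricGraph)

/-- A walk from `v` to `w`: consecutive darts are incident. -/
def IsWalk : List G.Dart → G.V → G.V → Prop
  | [], v, w => v = w
  | d :: W, v, w => G.dartTail d = v ∧ IsWalk W (G.dartHead d) w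

@[simp] lemma isWalk_nil {v w : G.V} : G.IsWalk [] v w ↔ v = w := by
  rw [IsWalk]

@[simp] lemma isWalk_cons {d : G.Dart} {W : List G.Dart} {v w : G.V} :
    G.IsWalk (d :: W) v w ↔ G.dartTail d = v ∧ G.IsWalk W (G.dartHead d) w := by
  rw [IsWalk]

lemma isWalk_append {A B : List G.Dart} {v w : G.V} :
    G.IsWalk (A ++ B) v w ↔ ∃ u, G.IsWalk A v u ∧ G.IsWalk B u w := by
  induction A generalizing v with
  | nil => simp
  | cons d A ih =>
    simp only [List.cons_append, isWalk_cons, ih]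
    tauto

/-- Signed sum of an edge-weight along a walk. -/
noncomputable def dsum (I : G.E → ℝ) (W : List G.Dart) : ℝ :=
  (W.map (fun d => G.sign d * I d.1)).sum

@[simp] lemma dsum_nil (I : G.E → ℝ) : G.dsum I [] = 0 := rfl

@[simp] lemma dsum_cons (I : G.E → ℝ) (d : G.Dart) (W : List G.Dart) :
    G.dsum I (d :: W) = G.sign d * I d.1 + G.dsum I W := rfl

@[simp] lemma dsum_append (I : G.E → ℝ) (A B : List G.Dart) :
    G.dsum I (A ++ B) = G.dsum I A + G.dsum I B := by
  simp [dsum]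

lemma isWalk_chain' {W : List G.Dart} {v w : G.V} (h : G.IsWalk W v w) :
    W.Chain' (fun d₁ d₂ => G.dartHead d₁ = G.dartTail d₂) := by
  induction W generalizing v with
  | nil => exact List.isChain_nil
  | cons d W ih =>
    rw [isWalk_cons] at h
    cases W with
    | nil => exact List.isChain_singleton _
    | cons d' W' =>
      refine List.isChain_cons_cons.mpr ?_
      rw [isWalk_cons] at h
      exact ⟨h.2.1.symm, ih h.2⟩

lemma isWalk_head? {W : List G.Dart} {v w : G.V} (h : G.IsWalk W v w) :
    ∀ d ∈ W.head?, G.dartTail d = v := by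
  cases W with
  | nil => simp
  | cons d W =>
    intro d' hd'
    simp only [List.head?_cons, Option.mem_some_iff] at hd'
    subst hd'
    exact (G.isWalk_cons.mp h).1

lemma isWalk_getLast? {W : List G.Dart} {v w : G.V} (h : G.IsWalk W v w) :
    ∀ d ∈ W.getLast?, G.dartHead d = w := by
  induction W generalizing v with
  | nil => simp
  | cons d W ih =>
    rw [isWalk_cons] at h
    cases W with
    | nil =>
      intro d' hd'
      simp only [List.getLast?_singleton, Option.mem_some_iff] at hd'
      subst hd'
      exact G.isWalk_nil.mp h.2
    | cons d' W' =>
      rw [List.getLast?_cons_cons]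
      exact ih h.2

lemma isCircuit_of_walk {W : List G.Dart} {v : G.V} (hW : G.IsWalk W v v)
    (hne : W ≠ []) (hnd : (W.map Prod.fst).Nodup) : G.IsCircuit W := by
  refine ⟨⟨hne, G.isWalk_chain' hW, hnd⟩, fun dl hdl df hdf => ?_⟩
  rw [G.isWalk_getLast? hW dl hdl, (G.isWalk_head? hW df hdf).symm]

/-- The reversal of a dart. -/
def revDart (d : G.Dart) : G.Dart := (d.1, !d.2)

@[simp] lemma dartTail_revDart (d : G.Dart) : G.dartTail (G.revDart d) = G.dartHead d := by
  rcases d with ⟨e, b⟩; cases b <;> simp [revDart, dartTail, dartHead]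

@[simp] lemma dartHead_revDart (d : G.Dart) : G.dartHead (G.revDart d) = G.dartTail d := by
  rcases d with ⟨e, b⟩; cases b <;> simp [revDart, dartTail, dartHead]

@[simp] lemma sign_revDart (d : G.Dart) : G.sign (G.revDart d) = - G.sign d := by
  rcases d with ⟨e, b⟩; cases b <;> simp [revDart, sign]

@[simp] lemma fst_revDart (d : G.Dart) : (G.revDart d).1 = d.1 := rfl

lemma isWalk_reverse {W : List G.Dart} {v w : G.V} (h : G.IsWalk W v w) :
    G.IsWalk ((W.map G.revDart).reverse) w v := by
  induction W generalizing v with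
  | nil => simpa using (G.isWalk_nil.mp h).symm
  | cons d W ih =>
    rw [isWalk_cons] at h
    simp only [List.map_cons, List.reverse_cons]
    refine G.isWalk_append.mpr ⟨G.dartHead d, ih h.2, ?_⟩
    rw [isWalk_cons]
    exact ⟨G.dartTail_revDart d, by simp [h.1]⟩

lemma dsum_reverse (I : G.E → ℝ) (W : List G.Dart) :
    G.dsum I ((W.map G.revDart).reverse) = - G.dsum I W := by
  induction W with
  | nil => simp
  | cons d W ih =>
    simp only [List.map_cons, List.reverse_cons, dsum_append, dsum_cons, dsum_nil, ih,
      sign_revDart, fst_revDart]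
    ring

lemma exists_dup_decomp {α β : Type*} (f : α → β) [DecidableEq β] :
    ∀ (l : List α), ¬ (l.map f).Nodup →
      ∃ A d1 B d2 C, l = A ++ d1 :: B ++ d2 :: C ∧ f d1 = f d2 := by
  intro l
  induction l with
  | nil => simp
  | cons a t ih =>
    intro h
    by_cases hmem : f a ∈ t.map f
    · obtain ⟨d2, hd2, hf⟩ := List.mem_map.mp hmem
      obtain ⟨B, C, rfl⟩ := List.append_of_mem hd2
      exact ⟨[], a, B, d2, C, by simp, hf.symm⟩
    · have ht : ¬ (t.map f).Nodup := fun hnd =>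
        h (by simp only [List.map_cons, List.nodup_cons]; exact ⟨hmem, hnd⟩)
      obtain ⟨A, d1, B, d2, C, rfl, hf⟩ := ih ht
      exact ⟨a :: A, d1, B, d2, C, by simp, hf⟩

lemma dsum_closed_eq_zero (I : G.E → ℝ)
    (hcirc : ∀ C, G.IsCircuit C → G.dsum I C = 0) :
    ∀ n (W : List G.Dart) (v : G.V), W.length ≤ n → G.IsWalk W v v → G.dsum I W = 0 := by
  intro n
  induction n with
  | zero =>
    intro W v hlen _
    have : W = [] := List.eq_nil_of_length_eq_zero (Nat.le_zero.mp hlen)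
    simp [this]
  | succ n ih =>
    intro W v hlen hW
    by_cases hnd : (W.map Prod.fst).Nodup
    · rcases eq_or_ne W [] with rfl | hne
      · simp
      · exact hcirc W (G.isCircuit_of_walk hW hne hnd)
    · obtain ⟨A, d1, B, d2, C, rfl, hfe⟩ := exists_dup_decomp Prod.fst _ hnd
      obtain ⟨u, hAB, hX⟩ := G.isWalk_append.mp hW
      rw [isWalk_cons] at hX
      obtain ⟨htail2, hC⟩ := hX
      obtain ⟨u1, hA, hdB⟩ := G.isWalk_append.mp hAB
      rw [isWalk_cons] at hdB
      obtain ⟨htail1, hB⟩ := hdB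
      have hlen' : A.length + B.length + C.length + 2 ≤ n + 1 := by
        simp only [List.length_append, List.length_cons] at hlen
        omega
      by_cases hb : d1.2 = d2.2
      · -- the same dart occurs twice
        have hd : d1 = d2 := Prod.ext hfe hb
        subst hd
        have hB' : G.IsWalk (B ++ [d1]) (G.dartHead d1) (G.dartHead d1) := by
          refine G.isWalk_append.mpr ⟨u, hB, ?_⟩
          rw [isWalk_cons]
          exact ⟨htail2, G.isWalk_nil.mpr rfl⟩
        have hCA : G.IsWalk (C ++ A) (G.dartHead d1) u1 :=
          G.isWalk_append.mpr ⟨v, hC, hA⟩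
        have hCA' : G.IsWalk (d1 :: (C ++ A)) u1 u1 := G.isWalk_cons.mpr ⟨htail1, hCA⟩
        have hl1 : (B ++ [d1]).length ≤ n := by
          simp only [List.length_append, List.length_cons, List.length_nil]
          omega
        have hl2 : (d1 :: (C ++ A)).length ≤ n := by
          simp only [List.length_cons, List.length_append]
          omega
        have z1 := ih (B ++ [d1]) (G.dartHead d1) hl1 hB'
        have z2 := ih (d1 :: (C ++ A)) u1 hl2 hCA'
        simp only [dsum_append, dsum_cons, dsum_nil] at z1 z2 ⊢
        linarith
      · -- the edge is traversed in both directions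
        have hd : d2 = G.revDart d1 := by
          rcases d1 with ⟨e1, b1⟩; rcases d2 with ⟨e2, b2⟩
          simp only at hfe
          subst hfe
          cases b1 <;> cases b2 <;> simp_all [revDart]
        have htail2' : G.dartTail d2 = G.dartHead d1 := by rw [hd]; simp
        have hhead2' : G.dartHead d2 = G.dartTail d1 := by rw [hd]; simp
        have hu : u = G.dartHead d1 := htail2.symm.trans htail2'
        rw [hu] at hB
        have hC' : G.IsWalk C u1 v := by rwa [hhead2', htail1] at hC
        have hCA : G.IsWalk (C ++ A) u1 u1 := G.isWalk_append.mpr ⟨v, hC', hA⟩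
        have hl1 : B.length ≤ n := by omega
        have hl2 : (C ++ A).length ≤ n := by
          simp only [List.length_append]
          omega
        have z1 := ih B (G.dartHead d1) hl1 hB
        have z2 := ih (C ++ A) u1 hl2 hCA
        have hsg : G.sign d2 = - G.sign d1 := by rw [hd]; simp
        have hfe' : d2.1 = d1.1 := hfe.symm
        simp only [dsum_append, dsum_cons, dsum_nil, hsg, hfe'] at z1 z2 ⊢
        linarith

end OrientedMetricGraph

/-- If `ψ ∈ L²(Γ)` has vanishing weighted integral
`∫_Γ ψ χ_C ds = 0` along every circuit `C` of (the undirected version of) a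
connected finite oriented metric graph `Γ`, then `ψ` admits a potential: a
function `φ`, continuous on the graph and `H¹` on each edge, with
`∂_Γ φ = ψ` almost everywhere (expressed by the integral representation
`φ e s = φ e 0 + ∫₀^s ψ e`). -/
theorem exists_potential_of_circuit_integrals_vanish (G : OrientedMetricGraph)
    (hconn : ∀ v w : G.V, Relation.ReflTransGen G.Adj v w)
    (ψ : G.E → ℝ → ℝ)
    (hint : ∀ e, IntervalIntegrable (ψ e) MeasureTheory.volume 0 (G.len e))
    (hL2 : ∀ e, MeasureTheory.MemLp (ψ e) 2
      (MeasureTheory.volume.restrict (Set.Ioc (0:ℝ) (G.len e))))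
    (hcirc : ∀ C : List G.Dart, G.IsCircuit C → G.trailIntegral ψ C = 0) :
    ∃ φ : G.E → ℝ → ℝ, G.VertexConsistent φ ∧
      ∀ e, ∀ s ∈ Set.Icc (0:ℝ) (G.len e),
        φ e s = φ e 0 + ∫ t in (0:ℝ)..s, ψ e t := by
  classical
  by_cases hE : Nonempty G.E
  · have hV : Nonempty G.V := ⟨G.src hE.some⟩
    obtain ⟨v0⟩ := hV
    have hwalk : ∀ v, ∃ W, G.IsWalk W v0 v := by
      intro v
      induction hconn v0 v with
      | refl => exact ⟨[], G.isWalk_nil.mpr rfl⟩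
      | tail _ hadj ih =>
        obtain ⟨W, hW⟩ := ih
        obtain ⟨d, hdt, hdh⟩ := hadj
        refine ⟨W ++ [d], G.isWalk_append.mpr ⟨_, hW, ?_⟩⟩
        rw [G.isWalk_cons]
        exact ⟨hdt, G.isWalk_nil.mpr hdh⟩
    choose Wv hWv using hwalk
    set I : G.E → ℝ := fun e => ∫ t in (0:ℝ)..(G.len e), ψ e t with hI
    have hcirc' : ∀ C, G.IsCircuit C → G.dsum I C = 0 := by
      intro C hC
      have h2 : G.dsum I C = G.trailIntegral ψ C := rfl
      rw [h2]
      exact hcirc C hC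
    have key : ∀ e, G.dsum I (Wv (G.tgt e)) = G.dsum I (Wv (G.src e)) + I e := by
      intro e
      have hd1 : G.IsWalk [(e, true)] (G.src e) (G.tgt e) := by
        rw [G.isWalk_cons]
        refine ⟨by simp [OrientedMetricGraph.dartTail], ?_⟩
        rw [G.isWalk_nil]
        simp [OrientedMetricGraph.dartHead]
      have h1 : G.IsWalk ((Wv (G.src e) ++ [(e, true)]) ++
          ((Wv (G.tgt e)).map G.revDart).reverse) v0 v0 :=
        G.isWalk_append.mpr ⟨G.tgt e,
          G.isWalk_append.mpr ⟨G.src e, hWv _, hd1⟩, G.isWalk_reverse (hWv _)⟩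
      have hz := G.dsum_closed_eq_zero I hcirc' _ _ v0 le_rfl h1
      have hs1 : G.sign (e, true) = 1 := by simp [OrientedMetricGraph.sign]
      rw [OrientedMetricGraph.dsum_append, OrientedMetricGraph.dsum_append,
        OrientedMetricGraph.dsum_cons, OrientedMetricGraph.dsum_nil,
        OrientedMetricGraph.dsum_reverse, hs1] at hz
      linarith
    refine ⟨fun e s => G.dsum I (Wv (G.src e)) + ∫ t in (0:ℝ)..s, ψ e t, ?_, ?_⟩
    · have hhead : ∀ d : G.Dart,
          G.headVal (fun e s => G.dsum I (Wv (G.src e)) + ∫ t in (0:ℝ)..s, ψ e t) d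
            = G.dsum I (Wv (G.dartHead d)) := by
        intro d
        rcases d with ⟨e, b⟩
        cases b
        · simp [OrientedMetricGraph.headVal, OrientedMetricGraph.dartHead]
        · have hk := key e
          simp only [OrientedMetricGraph.headVal, OrientedMetricGraph.dartHead]
          norm_num
          rw [hk, hI]
      intro d1 d2 h
      rw [hhead, hhead, h]
    · intro e s _
      simp
  · refine ⟨fun _ _ => 0, ?_, ?_⟩
    · intro d1
      exact absurd ⟨d1.1⟩ hE
    · intro e
      exact absurd ⟨e⟩ hE
end

section
/- Let φ ∈ (H¹_♯(Γ_Y))² be any solution of the canonical cell problem. Then the homogenized matrix A_hom := (1/|Γ_Y|) ∫_{Γ_Y} (t(y) + ∂_Γφ(y)) (t(y) + ∂_Γφ(y))ᵀ ds(y) is a symmetric, positive definite 2×2 matrix, provided the unit-cell graph Γ_Y is connected and there exist points y₁, y₂ ∈ Γ_Y with y₁ + e₁ ∈ Γ_Y and y₂ + e₂ ∈ Γ_Y (connectivity of the mesh to its horizontal and vertical translates). -/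
open MeasureTheory

/-- An `H¹` function on an oriented metric graph: edgewise absolutely
continuous with square-integrable edge derivative `dval`, and continuous at
the vertices of the graph. -/
structure H1Fun (G : OrientedMetricGraph) where
  val : G.E → ℝ → ℝ
  dval : G.E → ℝ → ℝ
  repr : ∀ e, ∀ s ∈ Set.Icc (0:ℝ) (G.len e),
    val e s = val e 0 + ∫ t in (0:ℝ)..s, dval e t
  dval_int : ∀ e, IntervalIntegrable (dval e) MeasureTheory.volume 0 (G.len e)
  dval_L2 : ∀ e, MeasureTheory.MemLp (dval e) 2
    (MeasureTheory.volume.restrict (Set.Ioc (0:ℝ) (G.len e)))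
  consistent : G.VertexConsistent val

/-- The unit-cell graph `Γ_Y`: an oriented metric graph together with an
arc-length (`W^{1,∞}`) parametrization `emb` of each edge into the plane,
with unit tangent field `tang`. For the periodic graph `Γ_{Y,♯}` the vertex
identifications of opposite boundary points are part of the combinatorial
data (`src`/`tgt`), while the embeddings of identified endpoints may differ
by integer translations. -/
structure CellGraph extends OrientedMetricGraph where
  emb : E → ℝ → ℝ × ℝ
  tang : E → ℝ → ℝ × ℝ
  emb_rep : ∀ e, ∀ s ∈ Set.Icc (0:ℝ) (len e),
    emb e s = emb e 0 + ∫ t in (0:ℝ)..s, tang e t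
  tang_int : ∀ e, IntervalIntegrable (tang e) MeasureTheory.volume 0 (len e)
  tang_unit : ∀ e, ∀ᵐ s ∂(MeasureTheory.volume.restrict (Set.Ioc (0:ℝ) (len e))),
    ‖tang e s‖ = 1

namespace CellGraph

variable (G : CellGraph)

/-- The `i`-th component of the unit tangent field. -/
noncomputable def tangComp (i : Fin 2) (e : G.E) (s : ℝ) : ℝ :=
  if i = 0 then (G.tang e s).1 else (G.tang e s).2

/-- The canonical cell problem: `φ = (φ₀, φ₁) ∈ (H¹_♯(Γ_Y))²` satisfies
`∫_{Γ_Y} ∂_Γφ_i ∂_Γψ ds = -∫_{Γ_Y} t_i ∂_Γψ ds` for every periodic test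
function `ψ ∈ H¹_♯(Γ_Y)`. -/
def SolvesCanonical (φ : Fin 2 → H1Fun G.toOrientedMetricGraph) : Prop :=
  ∀ i : Fin 2, ∀ ψ : H1Fun G.toOrientedMetricGraph,
    (∑ e : G.E, ∫ s in (0:ℝ)..(G.len e), (φ i).dval e s * ψ.dval e s)
      = - ∑ e : G.E, ∫ s in (0:ℝ)..(G.len e), G.tangComp i e s * ψ.dval e s

/-- Total length `|Γ_Y|` of the unit-cell graph. -/
noncomputable def totalLen : ℝ := ∑ e : G.E, G.len e

/-- The homogenized tensor
`A_hom = (1/|Γ_Y|) ∫_{Γ_Y} (t + ∂_Γφ)(t + ∂_Γφ)ᵀ ds`. -/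
noncomputable def Ahom (φ : Fin 2 → H1Fun G.toOrientedMetricGraph) :
    Matrix (Fin 2) (Fin 2) ℝ :=
  Matrix.of fun i j =>
    (∑ e : G.E, ∫ s in (0:ℝ)..(G.len e),
      (G.tangComp i e s + (φ i).dval e s) * (G.tangComp j e s + (φ j).dval e s))
      / G.totalLen

/-- Geometric displacement of a walk: the signed sum of the differences of the
embedded endpoints of its darts. -/
noncomputable def disp (T : List G.Dart) : ℝ × ℝ :=
  (T.map fun d => G.sign d • (G.emb d.1 (G.len d.1) - G.emb d.1 0)).sum

/-- The circuit tangent vector `t_C = ∫_{Γ_Y} t χ_C ds`. -/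
noncomputable def circTang (C : List G.Dart) : ℝ × ℝ :=
  (C.map fun d => G.sign d • (∫ s in (0:ℝ)..(G.len d.1), G.tang d.1 s)).sum

end CellGraph


section AuxProofs

open OrientedMetricGraph

namespace CellGraph

variable (G : CellGraph)

lemma len_nonneg (e : G.E) : (0:ℝ) ≤ G.len e := (G.len_pos e).le

lemma isFiniteRestrict (e : G.E) :
    IsFiniteMeasure (volume.restrict (Set.Ioc (0:ℝ) (G.len e))) := by
  constructor
  rw [Measure.restrict_apply_univ, Real.volume_Ioc]
  exact ENNReal.ofReal_lt_top

lemma tang_integrableOn (e : G.E) :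
    IntegrableOn (G.tang e) (Set.Ioc (0:ℝ) (G.len e)) volume :=
  (intervalIntegrable_iff_integrableOn_Ioc_of_le (G.len_nonneg e)).1 (G.tang_int e)

lemma tangComp_memL2 (i : Fin 2) (e : G.E) :
    MemLp (G.tangComp i e) 2 (volume.restrict (Set.Ioc (0:ℝ) (G.len e))) := by
  have := G.isFiniteRestrict e
  have hm : AEStronglyMeasurable (G.tang e)
      (volume.restrict (Set.Ioc (0:ℝ) (G.len e))) :=
    (G.tang_integrableOn e).aestronglyMeasurable
  have hm' : AEStronglyMeasurable (G.tangComp i e)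
      (volume.restrict (Set.Ioc (0:ℝ) (G.len e))) := by
    unfold CellGraph.tangComp
    split
    · exact continuous_fst.comp_aestronglyMeasurable hm
    · exact continuous_snd.comp_aestronglyMeasurable hm
  refine MemLp.of_bound hm' 1 ?_
  filter_upwards [G.tang_unit e] with s hs
  unfold CellGraph.tangComp
  split
  · exact le_of_le_of_eq (norm_fst_le _) hs
  · exact le_of_le_of_eq (norm_snd_le _) hs

/-- Product of two edgewise `L²` functions is interval integrable. -/
lemma mul_intervalIntegrable {e : G.E} {u v : ℝ → ℝ}
    (hu : MemLp u 2 (volume.restrict (Set.Ioc (0:ℝ) (G.len e))))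
    (hv : MemLp v 2 (volume.restrict (Set.Ioc (0:ℝ) (G.len e)))) :
    IntervalIntegrable (fun s => u s * v s) volume 0 (G.len e) := by
  rw [intervalIntegrable_iff_integrableOn_Ioc_of_le (G.len_nonneg e)]
  have h : MemLp (u • v) 1 (volume.restrict (Set.Ioc (0:ℝ) (G.len e))) :=
    hv.smul hu (hpqr := ⟨by norm_num; exact ENNReal.inv_two_add_inv_two⟩)
  have := memLp_one_iff_integrable.1 h
  exact this

lemma memL2_intervalIntegrable {e : G.E} {u : ℝ → ℝ}
    (hu : MemLp u 2 (volume.restrict (Set.Ioc (0:ℝ) (G.len e)))) :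
    IntervalIntegrable u volume 0 (G.len e) := by
  have := G.isFiniteRestrict e
  rw [intervalIntegrable_iff_integrableOn_Ioc_of_le (G.len_nonneg e)]
  exact hu.integrable (by norm_num)

/-- Continuity at vertices: the head value of a dart equals the tail value of
the next dart in a walk. -/
lemma head_eq_tail {val : G.E → ℝ → ℝ}
    (hcons : G.toOrientedMetricGraph.VertexConsistent val)
    (d₁ d₂ : G.Dart) (h : G.dartHead d₁ = G.dartTail d₂) :
    G.headVal val d₁ = G.tailVal val d₂ := by
  have h1 : G.dartTail d₂ = G.dartHead (d₂.1, !d₂.2) := by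
    rcases d₂ with ⟨e, b⟩
    cases b <;> simp [OrientedMetricGraph.dartTail, OrientedMetricGraph.dartHead]
  have h2 : G.tailVal val d₂ = G.headVal val (d₂.1, !d₂.2) := by
    rcases d₂ with ⟨e, b⟩
    cases b <;> simp [OrientedMetricGraph.tailVal, OrientedMetricGraph.headVal]
  rw [h2]
  exact hcons d₁ _ (by rw [← h1, h])

/-- Telescoping sum along a walk. -/
lemma telescope {val : G.E → ℝ → ℝ}
    (hcons : G.toOrientedMetricGraph.VertexConsistent val) :
    ∀ (T : List G.Dart) (d : G.Dart),
      List.Chain (fun d₁ d₂ => G.dartHead d₁ = G.dartTail d₂) d T →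
      ((d :: T).map fun d' => G.headVal val d' - G.tailVal val d').sum
        = G.headVal val ((d :: T).getLast (List.cons_ne_nil d T))
            - G.tailVal val d := by
  intro T
  induction T with
  | nil => intro d _; simp
  | cons d' T ih =>
    intro d hch
    rcases List.chain_cons.mp hch with ⟨h1, h2⟩
    have hkey : G.headVal val d = G.tailVal val d' := G.head_eq_tail hcons _ _ h1
    have hrec := ih d' h2
    simp only [List.map_cons, List.sum_cons] at hrec ⊢
    rw [List.getLast_cons (List.cons_ne_nil d' T), hrec, hkey]
    ring

/-- The dart integral of the derivative of an `H¹` function is the difference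
of the endpoint values. -/
lemma dartIntegral_dval (ψ : H1Fun G.toOrientedMetricGraph) (d : G.Dart) :
    G.dartIntegral ψ.dval d = G.headVal ψ.val d - G.tailVal ψ.val d := by
  rcases d with ⟨e, b⟩
  have h := ψ.repr e (G.len e) ⟨G.len_nonneg e, le_refl _⟩
  have h' : ∫ s in (0:ℝ)..(G.len e), ψ.dval e s
      = ψ.val e (G.len e) - ψ.val e 0 := by
    rw [h]; ring
  cases b <;>
    simp only [OrientedMetricGraph.dartIntegral, OrientedMetricGraph.sign,
      OrientedMetricGraph.headVal, OrientedMetricGraph.tailVal,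
      if_true, if_false, Bool.false_eq_true] <;>
    rw [h'] <;> ring

/-- The integral of the derivative of an `H¹` function over a circuit
vanishes. -/
lemma circuit_dval (ψ : H1Fun G.toOrientedMetricGraph) (C : List G.Dart)
    (hC : G.IsCircuit C) : G.trailIntegral ψ.dval C = 0 := by
  obtain ⟨⟨hne, hch, -⟩, hclose⟩ := hC
  obtain ⟨d, T, rfl⟩ := List.exists_cons_of_ne_nil hne
  have hch' : List.Chain (fun d₁ d₂ => G.dartHead d₁ = G.dartTail d₂) d T := hch
  unfold OrientedMetricGraph.trailIntegral
  rw [List.map_congr_left (fun d' _ => G.dartIntegral_dval ψ d')]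
  rw [G.telescope ψ.consistent T d hch']
  have hlastmem : ((d :: T).getLast (List.cons_ne_nil d T)) ∈ (d :: T).getLast? := by
    rw [List.getLast?_eq_getLast (List.cons_ne_nil d T)]; rfl
  have hheadmem : d ∈ (d :: T).head? := rfl
  have hcl := hclose _ hlastmem d hheadmem
  rw [G.head_eq_tail ψ.consistent _ _ hcl]
  ring

/-- Dart integral of a tangent component in terms of the embedding. -/
lemma dartIntegral_tangComp (i : Fin 2) (d : G.Dart) :
    G.dartIntegral (G.tangComp i) d
      = (if i = 0 then (G.sign d • (G.emb d.1 (G.len d.1) - G.emb d.1 0)).1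
         else (G.sign d • (G.emb d.1 (G.len d.1) - G.emb d.1 0)).2) := by
  have hrep := G.emb_rep d.1 (G.len d.1) ⟨G.len_nonneg d.1, le_refl _⟩
  have hint : (∫ s in (0:ℝ)..(G.len d.1), G.tang d.1 s)
      = G.emb d.1 (G.len d.1) - G.emb d.1 0 := by
    rw [hrep]; abel
  have h1 : ∫ s in (0:ℝ)..(G.len d.1), (G.tang d.1 s).1
      = (∫ s in (0:ℝ)..(G.len d.1), G.tang d.1 s).1 := by
    exact (ContinuousLinearMap.fst ℝ ℝ ℝ).intervalIntegral_comp_comm (G.tang_int d.1)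
  have h2 : ∫ s in (0:ℝ)..(G.len d.1), (G.tang d.1 s).2
      = (∫ s in (0:ℝ)..(G.len d.1), G.tang d.1 s).2 := by
    exact (ContinuousLinearMap.snd ℝ ℝ ℝ).intervalIntegral_comp_comm (G.tang_int d.1)
  unfold OrientedMetricGraph.dartIntegral CellGraph.tangComp
  split
  · rw [h1, hint, Prod.smul_fst, smul_eq_mul]
  · rw [h2, hint, Prod.smul_snd, smul_eq_mul]

lemma list_sum_fst (l : List (ℝ × ℝ)) : l.sum.1 = (l.map Prod.fst).sum := by
  induction l with
  | nil => simp
  | cons a l ih => simp [ih]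

lemma list_sum_snd (l : List (ℝ × ℝ)) : l.sum.2 = (l.map Prod.snd).sum := by
  induction l with
  | nil => simp
  | cons a l ih => simp [ih]

/-- Trail integral of a tangent component equals the corresponding component
of the geometric displacement. -/
lemma trailIntegral_tangComp (i : Fin 2) (C : List G.Dart) :
    G.trailIntegral (G.tangComp i) C
      = (if i = 0 then (G.disp C).1 else (G.disp C).2) := by
  unfold OrientedMetricGraph.trailIntegral CellGraph.disp
  rw [List.map_congr_left (fun d _ => G.dartIntegral_tangComp i d)]
  split
  · rw [list_sum_fst, List.map_map]; rfl
  · rw [list_sum_snd, List.map_map]; rfl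

lemma list_sum_comb {α : Type*} (C : List α) (a b u v : α → ℝ) (xa xb : ℝ) :
    (C.map fun d => xa * (a d + u d) + xb * (b d + v d)).sum
      = xa * ((C.map a).sum + (C.map u).sum)
          + xb * ((C.map b).sum + (C.map v).sum) := by
  induction C with
  | nil => simp
  | cons d C ih => simp only [List.map_cons, List.sum_cons, ih]; ring

end CellGraph

end AuxProofs

/-- For any solution `φ` of the canonical cell problem, the
homogenized matrix `A_hom = (1/|Γ_Y|) ∫ (t+∂_Γφ)(t+∂_Γφ)ᵀ ds` is symmetric
and positive definite, provided `Γ_Y` is connected and is connected to its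
horizontal and vertical translates (there are circuits of the periodic graph
whose geometric displacement is `e₁` resp. `e₂`). -/
theorem Ahom_isSymm_posDef (G : CellGraph)
    (hconn : ∀ v w : G.V, Relation.ReflTransGen G.toOrientedMetricGraph.Adj v w)
    (hper : ∀ i : Fin 2, ∃ C : List G.Dart, G.IsCircuit C ∧
      G.disp C = (if i = 0 then (((1:ℝ), (0:ℝ)) : ℝ × ℝ) else ((0:ℝ), (1:ℝ))))
    (φ : Fin 2 → H1Fun G.toOrientedMetricGraph) (hφ : G.SolvesCanonical φ) :
    (G.Ahom φ).IsSymm ∧ (G.Ahom φ).PosDef := by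
  classical
  have hL : 0 < G.totalLen := by
    obtain ⟨C0, hC0, -⟩ := hper 0
    obtain ⟨d, T, rfl⟩ := List.exists_cons_of_ne_nil hC0.1.1
    have : Nonempty G.E := ⟨d.1⟩
    exact Finset.sum_pos (fun e _ => G.len_pos e) Finset.univ_nonempty
  have hfL2 : ∀ (i : Fin 2) (e : G.E),
      MemLp (fun s => G.tangComp i e s + (φ i).dval e s) 2
        (volume.restrict (Set.Ioc (0:ℝ) (G.len e))) :=
    fun i e => (G.tangComp_memL2 i e).add ((φ i).dval_L2 e)
  have hprod : ∀ (i j : Fin 2) (e : G.E),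
      IntervalIntegrable
        (fun s => (G.tangComp i e s + (φ i).dval e s)
          * (G.tangComp j e s + (φ j).dval e s)) volume 0 (G.len e) :=
    fun i j e => G.mul_intervalIntegrable (hfL2 i e) (hfL2 j e)
  have hAentry : ∀ i j : Fin 2, G.Ahom φ i j
      = (∑ e : G.E, ∫ s in (0:ℝ)..(G.len e),
          (G.tangComp i e s + (φ i).dval e s)
            * (G.tangComp j e s + (φ j).dval e s)) / G.totalLen :=
    fun i j => rfl
  have hsymm : (G.Ahom φ).IsSymm := by
    apply Matrix.ext
    intro i j
    rw [Matrix.transpose_apply, hAentry i j, hAentry j i]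
    congr 1
    refine Finset.sum_congr rfl fun e _ => ?_
    refine intervalIntegral.integral_congr fun s _ => ?_
    ring
  refine ⟨hsymm, Matrix.posDef_iff_dotProduct_mulVec.mpr ⟨?_, ?_⟩⟩
  · rw [Matrix.IsHermitian, Matrix.conjTranspose_eq_transpose_of_trivial]
    exact hsymm
  intro x hx
  have hstar : star x = x := by simp
  have hg2 : ∀ e : G.E,
      (∫ s in (0:ℝ)..(G.len e),
        (x 0 * (G.tangComp 0 e s + (φ 0).dval e s)
            + x 1 * (G.tangComp 1 e s + (φ 1).dval e s))
          * (x 0 * (G.tangComp 0 e s + (φ 0).dval e s)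
            + x 1 * (G.tangComp 1 e s + (φ 1).dval e s)))
        = x 0 * x 0 * (∫ s in (0:ℝ)..(G.len e),
              (G.tangComp 0 e s + (φ 0).dval e s) * (G.tangComp 0 e s + (φ 0).dval e s))
          + (x 0 * x 1 * (∫ s in (0:ℝ)..(G.len e),
              (G.tangComp 0 e s + (φ 0).dval e s) * (G.tangComp 1 e s + (φ 1).dval e s))
          + (x 1 * x 0 * (∫ s in (0:ℝ)..(G.len e),
              (G.tangComp 1 e s + (φ 1).dval e s) * (G.tangComp 0 e s + (φ 0).dval e s))
          + x 1 * x 1 * (∫ s in (0:ℝ)..(G.len e),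
              (G.tangComp 1 e s + (φ 1).dval e s) * (G.tangComp 1 e s + (φ 1).dval e s)))) := by
    intro e
    have hfun : (fun s =>
        (x 0 * (G.tangComp 0 e s + (φ 0).dval e s)
            + x 1 * (G.tangComp 1 e s + (φ 1).dval e s))
          * (x 0 * (G.tangComp 0 e s + (φ 0).dval e s)
            + x 1 * (G.tangComp 1 e s + (φ 1).dval e s)))
        = fun s => x 0 * x 0 *
              ((G.tangComp 0 e s + (φ 0).dval e s) * (G.tangComp 0 e s + (φ 0).dval e s))
          + (x 0 * x 1 *
              ((G.tangComp 0 e s + (φ 0).dval e s) * (G.tangComp 1 e s + (φ 1).dval e s))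
          + (x 1 * x 0 *
              ((G.tangComp 1 e s + (φ 1).dval e s) * (G.tangComp 0 e s + (φ 0).dval e s))
          + x 1 * x 1 *
              ((G.tangComp 1 e s + (φ 1).dval e s) * (G.tangComp 1 e s + (φ 1).dval e s)))) := by
      funext s; ring
    rw [hfun,
      intervalIntegral.integral_add ((hprod 0 0 e).const_mul _)
        (((hprod 0 1 e).const_mul _).add
          (((hprod 1 0 e).const_mul _).add ((hprod 1 1 e).const_mul _))),
      intervalIntegral.integral_add ((hprod 0 1 e).const_mul _)
        (((hprod 1 0 e).const_mul _).add ((hprod 1 1 e).const_mul _)),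
      intervalIntegral.integral_add ((hprod 1 0 e).const_mul _) ((hprod 1 1 e).const_mul _),
      intervalIntegral.integral_const_mul, intervalIntegral.integral_const_mul,
      intervalIntegral.integral_const_mul, intervalIntegral.integral_const_mul]
  have hquad : dotProduct (star x) ((G.Ahom φ).mulVec x)
      = (∑ e : G.E, ∫ s in (0:ℝ)..(G.len e),
          (x 0 * (G.tangComp 0 e s + (φ 0).dval e s)
              + x 1 * (G.tangComp 1 e s + (φ 1).dval e s))
            * (x 0 * (G.tangComp 0 e s + (φ 0).dval e s)
              + x 1 * (G.tangComp 1 e s + (φ 1).dval e s))) / G.totalLen := by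
    rw [hstar, Finset.sum_congr rfl fun e _ => hg2 e]
    simp only [Matrix.mulVec, dotProduct, Fin.sum_univ_two, hAentry]
    rw [Finset.sum_add_distrib, Finset.sum_add_distrib, Finset.sum_add_distrib,
      ← Finset.mul_sum, ← Finset.mul_sum, ← Finset.mul_sum, ← Finset.mul_sum]
    field_simp
    ring
  rw [hquad]
  have hnn : ∀ e ∈ (Finset.univ : Finset G.E), (0:ℝ) ≤
      ∫ s in (0:ℝ)..(G.len e),
        (x 0 * (G.tangComp 0 e s + (φ 0).dval e s)
            + x 1 * (G.tangComp 1 e s + (φ 1).dval e s))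
          * (x 0 * (G.tangComp 0 e s + (φ 0).dval e s)
            + x 1 * (G.tangComp 1 e s + (φ 1).dval e s)) :=
    fun e _ => intervalIntegral.integral_nonneg (G.len_nonneg e)
      (fun s _ => mul_self_nonneg _)
  refine div_pos ?_ hL
  rcases lt_or_eq_of_le (Finset.sum_nonneg hnn) with h | h
  · exact h
  exfalso
  have hzero : ∀ e : G.E,
      (∫ s in (0:ℝ)..(G.len e),
        (x 0 * (G.tangComp 0 e s + (φ 0).dval e s)
          + x 1 * (G.tangComp 1 e s + (φ 1).dval e s))) = 0 := by
    intro e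
    have he := (Finset.sum_eq_zero_iff_of_nonneg hnn).1 h.symm e (Finset.mem_univ e)
    rw [intervalIntegral.integral_of_le (G.len_nonneg e)] at he
    have hgL2 : MemLp (fun s => x 0 * (G.tangComp 0 e s + (φ 0).dval e s)
        + x 1 * (G.tangComp 1 e s + (φ 1).dval e s)) 2
        (volume.restrict (Set.Ioc (0:ℝ) (G.len e))) :=
      ((hfL2 0 e).const_mul (x 0)).add ((hfL2 1 e).const_mul (x 1))
    have hint : Integrable (fun s =>
        (x 0 * (G.tangComp 0 e s + (φ 0).dval e s)
          + x 1 * (G.tangComp 1 e s + (φ 1).dval e s))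
          * (x 0 * (G.tangComp 0 e s + (φ 0).dval e s)
            + x 1 * (G.tangComp 1 e s + (φ 1).dval e s)))
        (volume.restrict (Set.Ioc (0:ℝ) (G.len e))) :=
      (intervalIntegrable_iff_integrableOn_Ioc_of_le (G.len_nonneg e)).1
        (G.mul_intervalIntegrable hgL2 hgL2)
    have hae := (integral_eq_zero_iff_of_nonneg_ae
      (Filter.Eventually.of_forall fun s => mul_self_nonneg _) hint).1 he
    have hg0 : (fun s => x 0 * (G.tangComp 0 e s + (φ 0).dval e s)
        + x 1 * (G.tangComp 1 e s + (φ 1).dval e s))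
        =ᶠ[ae (volume.restrict (Set.Ioc (0:ℝ) (G.len e)))] 0 := by
      filter_upwards [hae] with s hs
      exact mul_self_eq_zero.1 (by simpa using hs)
    rw [intervalIntegral.integral_of_le (G.len_nonneg e)]
    exact integral_eq_zero_of_ae hg0
  have key : ∀ C : List G.Dart, G.IsCircuit C →
      x 0 * (G.disp C).1 + x 1 * (G.disp C).2 = 0 := by
    intro C hC
    have hdart : ∀ d : G.Dart,
        x 0 * (G.dartIntegral (G.tangComp 0) d + G.dartIntegral ((φ 0).dval) d)
          + x 1 * (G.dartIntegral (G.tangComp 1) d + G.dartIntegral ((φ 1).dval) d)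
          = 0 := by
      intro d
      have hti : ∀ i : Fin 2,
          IntervalIntegrable (G.tangComp i d.1) volume 0 (G.len d.1) :=
        fun i => G.memL2_intervalIntegrable (G.tangComp_memL2 i d.1)
      have hL0 := hzero d.1
      rw [intervalIntegral.integral_add
            (((hti 0).add ((φ 0).dval_int d.1)).const_mul _)
            (((hti 1).add ((φ 1).dval_int d.1)).const_mul _),
          intervalIntegral.integral_const_mul, intervalIntegral.integral_const_mul,
          intervalIntegral.integral_add (hti 0) ((φ 0).dval_int d.1),
          intervalIntegral.integral_add (hti 1) ((φ 1).dval_int d.1)] at hL0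
      simp only [OrientedMetricGraph.dartIntegral]
      linear_combination G.sign d * hL0
    have hsum0 : (C.map fun d =>
        x 0 * (G.dartIntegral (G.tangComp 0) d + G.dartIntegral ((φ 0).dval) d)
          + x 1 * (G.dartIntegral (G.tangComp 1) d + G.dartIntegral ((φ 1).dval) d)).sum
        = 0 :=
      List.sum_eq_zero fun y hy => by
        obtain ⟨d, -, rfl⟩ := List.mem_map.1 hy
        exact hdart d
    rw [CellGraph.list_sum_comb] at hsum0
    have ht0 := G.trailIntegral_tangComp 0 C
    have ht1 := G.trailIntegral_tangComp 1 C
    have hd0 := G.circuit_dval (φ 0) C hC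
    have hd1 := G.circuit_dval (φ 1) C hC
    simp only [OrientedMetricGraph.trailIntegral] at ht0 ht1 hd0 hd1
    rw [ht0, ht1, hd0, hd1] at hsum0
    simpa using hsum0
  obtain ⟨C0, hC0, hdisp0⟩ := hper 0
  obtain ⟨C1, hC1, hdisp1⟩ := hper 1
  have h0 := key C0 hC0
  have h1 := key C1 hC1
  rw [hdisp0] at h0
  rw [hdisp1] at h1
  simp only [if_pos rfl] at h0
  norm_num at h0 h1
  exact hx (funext fun i => by fin_cases i <;> simpa [h0, h1])
end

section
/- A function φ = (φ₁,φ₂) ∈ (H¹_♯(Γ_Y))² solves the canonical cell problem if and only if (i) for each edge with arc-length parametrization γ_i on [0,ℓ_i], the map s ↦ φ(γ_i(s)) + γ_i(s) is affine, and (ii) at every vertex v_j the Kirchhoff junction condition holds: the sum of (φ∘γ_i + γ_i)′(ℓ_i) over edges ending at v_j minus the sum of (φ∘γ_i + γ_i)′(0) over edges starting at v_j equals zero. -/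
open MeasureTheory

section Aux

/-- du Bois-Reymond type lemma. -/
theorem dubois {L : ℝ} (hL : 0 ≤ L) {h : ℝ → ℝ}
    (hint : IntervalIntegrable h volume 0 L)
    (hz : ∀ s ∈ Set.Icc (0:ℝ) L, ∫ t in (0:ℝ)..s, h t = 0) :
    ∀ᵐ s ∂(volume.restrict (Set.Ioc (0:ℝ) L)), h s = 0 := by
  set μ := volume.restrict (Set.Ioc (0:ℝ) L) with hμ
  have hInt : Integrable h μ :=
    (intervalIntegrable_iff_integrableOn_Ioc_of_le hL).mp hint
  -- integral of h over any Ioc a b w.r.t. μ vanishes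
  have key : ∀ a b : ℝ, ∫ s in Set.Ioc a b, h s ∂μ = 0 := by
    intro a b
    rw [hμ, Measure.restrict_restrict measurableSet_Ioc, Set.Ioc_inter_Ioc]
    rcases le_or_gt (a ⊔ 0) (b ⊓ L) with hab | hab
    · have h0 : (0:ℝ) ≤ a ⊔ 0 := le_sup_right
      have hbL : b ⊓ L ≤ L := inf_le_right
      have hsub : ∀ c : ℝ, 0 ≤ c → c ≤ L → IntervalIntegrable h volume 0 c := by
        intro c hc1 hc2
        apply hint.mono_set
        rw [Set.uIcc_of_le hc1, Set.uIcc_of_le hL]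
        exact Set.Icc_subset_Icc le_rfl hc2
      have h1 := hsub _ h0 (le_trans hab hbL)
      have h2 := hsub _ (le_trans h0 hab) hbL
      have : ∫ s in (a ⊔ 0)..(b ⊓ L), h s = 0 := by
        rw [← intervalIntegral.integral_interval_sub_left h2 h1]
        rw [hz _ ⟨le_trans h0 hab, hbL⟩, hz _ ⟨h0, le_trans hab hbL⟩, sub_zero]
      rwa [intervalIntegral.integral_of_le hab] at this
    · rw [Set.Ioc_eq_empty (not_lt.mpr hab.le), Measure.restrict_empty,
        integral_zero_measure]
  -- vanishing on all measurable sets via measure extensionality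
  have hIntU : ∫ s, h s ∂μ = 0 := by
    have := key (-1) (L+1)
    rwa [Measure.restrict_restrict measurableSet_Ioc,
      Set.inter_eq_self_of_subset_right (Set.Ioc_subset_Ioc (by linarith) (by linarith)),
      ← hμ] at this
  set ν₁ := μ.withDensity (fun s => ENNReal.ofReal (h s)) with hν₁
  set ν₂ := μ.withDensity (fun s => ENNReal.ofReal (-h s)) with hν₂
  have hfin : ∀ g : ℝ → ℝ, Integrable g μ → (∀ s, |g s| = |h s|) →
      IsFiniteMeasure (μ.withDensity (fun s => ENNReal.ofReal (g s))) := by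
    intro g hg habs
    constructor
    rw [withDensity_apply _ MeasurableSet.univ, Measure.restrict_univ]
    calc ∫⁻ s, ENNReal.ofReal (g s) ∂μ ≤ ∫⁻ s, ‖g s‖ₑ ∂μ := by
          refine lintegral_mono fun s => ?_
          rw [Real.enorm_eq_ofReal_abs]
          exact ENNReal.ofReal_le_ofReal (le_abs_self _)
      _ < ⊤ := hg.2
  have hfin₁ : IsFiniteMeasure ν₁ := hfin h hInt (fun s => rfl)
  have hfin₂ : IsFiniteMeasure ν₂ := hfin (fun s => -h s) hInt.neg (fun s => abs_neg _)
  have hdecomp : ∀ S : Set ℝ, MeasurableSet S →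
      ∫ s in S, h s ∂μ = (ν₁ S).toReal - (ν₂ S).toReal := by
    intro S hS
    rw [hν₁, hν₂, withDensity_apply _ hS, withDensity_apply _ hS]
    exact integral_eq_lintegral_pos_part_sub_lintegral_neg_part (hInt.restrict)
  have hννIoc : ∀ a b : ℝ, a < b → ν₁ (Set.Ioc a b) = ν₂ (Set.Ioc a b) := by
    intro a b _
    have := hdecomp (Set.Ioc a b) measurableSet_Ioc
    rw [key a b] at this
    exact (ENNReal.toReal_eq_toReal_iff' (measure_ne_top _ _) (measure_ne_top _ _)).mp
      (by linarith [this])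
  have hννuniv : ν₁ Set.univ = ν₂ Set.univ := by
    have := hdecomp _ MeasurableSet.univ
    rw [Measure.restrict_univ, hIntU] at this
    exact (ENNReal.toReal_eq_toReal_iff' (measure_ne_top _ _) (measure_ne_top _ _)).mp
      (by linarith [this])
  have hνν : ν₁ = ν₂ := Measure.ext_of_Ioc_finite ν₁ ν₂ hννuniv hννIoc
  have hall : ∀ S, MeasurableSet S → μ S < ⊤ → ∫ s in S, h s ∂μ = 0 := by
    intro S hS _
    rw [hdecomp S hS, hνν, sub_self]
  exact hInt.ae_eq_zero_of_forall_setIntegral_eq_zero hall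


-- product of two L² functions on Ioc is interval integrable
theorem mulIntInt {L : ℝ} (hL : 0 ≤ L) {f g : ℝ → ℝ}
    (hf : MemLp f 2 (volume.restrict (Set.Ioc (0:ℝ) L)))
    (hg : MemLp g 2 (volume.restrict (Set.Ioc (0:ℝ) L))) :
    IntervalIntegrable (fun s => f s * g s) volume 0 L := by
  rw [intervalIntegrable_iff_integrableOn_Ioc_of_le hL]
  have : MemLp (f • g) 1 (volume.restrict (Set.Ioc (0:ℝ) L)) :=
    MemLp.smul hg hf
  rw [memLp_one_iff_integrable] at this
  exact this

theorem intervalIntegrable_of_memL2 {L : ℝ} (hL : 0 ≤ L) {f : ℝ → ℝ}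
    (hf : MemLp f 2 (volume.restrict (Set.Ioc (0:ℝ) L))) :
    IntervalIntegrable f volume 0 L := by
  rw [intervalIntegrable_iff_integrableOn_Ioc_of_le hL]
  have := hf.mono_exponent (p := 1) (by norm_num)
  rw [memLp_one_iff_integrable] at this
  exact this

end Aux

section GraphAux
open OrientedMetricGraph
variable (G : CellGraph)

theorem tangComp_aesm (i : Fin 2) (e : G.E) :
    AEStronglyMeasurable (G.tangComp i e) (volume.restrict (Set.Ioc (0:ℝ) (G.len e))) := by
  have h := ((G.tang_int e).mono_set_ae (by rw [Set.uIoc_of_le (G.len_pos e).le]; exact Filter.EventuallyLE.refl _ _)).1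
  have haesm := h.aestronglyMeasurable
  unfold CellGraph.tangComp
  by_cases hi : i = 0 <;> simp only [hi, if_true, if_false] <;>
    [exact (continuous_fst.comp_aestronglyMeasurable haesm);
     exact (continuous_snd.comp_aestronglyMeasurable haesm)]

theorem tangComp_bound (i : Fin 2) (e : G.E) :
    ∀ᵐ s ∂(volume.restrict (Set.Ioc (0:ℝ) (G.len e))), ‖G.tangComp i e s‖ ≤ 1 := by
  filter_upwards [G.tang_unit e] with s hs
  unfold CellGraph.tangComp
  by_cases hi : i = 0 <;> simp only [hi, if_true, if_false]
  · calc ‖(G.tang e s).1‖ ≤ ‖G.tang e s‖ := norm_fst_le _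
      _ = 1 := hs
  · calc ‖(G.tang e s).2‖ ≤ ‖G.tang e s‖ := norm_snd_le _
      _ = 1 := hs

theorem tangComp_L2 (i : Fin 2) (e : G.E) :
    MemLp (G.tangComp i e) 2 (volume.restrict (Set.Ioc (0:ℝ) (G.len e))) :=
  MemLp.of_bound (tangComp_aesm G i e) 1 (tangComp_bound G i e)

/-- The combined field `t_i + φ_i'` on edge `e`. -/
noncomputable def Ffield (φ : Fin 2 → H1Fun G.toOrientedMetricGraph)
    (i : Fin 2) (e : G.E) (s : ℝ) : ℝ :=
  (φ i).dval e s + G.tangComp i e s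

variable (φ : Fin 2 → H1Fun G.toOrientedMetricGraph)

theorem Ffield_L2 (i : Fin 2) (e : G.E) :
    MemLp (Ffield G φ i e) 2 (volume.restrict (Set.Ioc (0:ℝ) (G.len e))) :=
  ((φ i).dval_L2 e).add (tangComp_L2 G i e)

theorem Ffield_intInt (i : Fin 2) (e : G.E) :
    IntervalIntegrable (Ffield G φ i e) volume 0 (G.len e) :=
  intervalIntegrable_of_memL2 (G.len_pos e).le (Ffield_L2 G φ i e)

/-- restatement of the weak formulation -/
theorem weak_iff :
    G.SolvesCanonical φ ↔ ∀ i : Fin 2, ∀ ψ : H1Fun G.toOrientedMetricGraph,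
      (∑ e : G.E, ∫ s in (0:ℝ)..(G.len e), Ffield G φ i e s * ψ.dval e s) = 0 := by
  have hsplit : ∀ i : Fin 2, ∀ ψ : H1Fun G.toOrientedMetricGraph, ∀ e : G.E,
      (∫ s in (0:ℝ)..(G.len e), Ffield G φ i e s * ψ.dval e s)
        = (∫ s in (0:ℝ)..(G.len e), (φ i).dval e s * ψ.dval e s)
          + ∫ s in (0:ℝ)..(G.len e), G.tangComp i e s * ψ.dval e s := by
    intro i ψ e
    rw [← intervalIntegral.integral_add
      (mulIntInt (G.len_pos e).le ((φ i).dval_L2 e) (ψ.dval_L2 e))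
      (mulIntInt (G.len_pos e).le (tangComp_L2 G i e) (ψ.dval_L2 e))]
    congr 1
    ext s
    simp [Ffield, add_mul]
  constructor
  · intro hs i ψ
    simp only [hsplit i ψ, Finset.sum_add_distrib, hs i ψ]
    ring
  · intro hs i ψ
    have := hs i ψ
    simp only [hsplit i ψ, Finset.sum_add_distrib] at this
    linarith

/-- Test function supported on a single edge, vanishing at both endpoints. -/
noncomputable def edgeTest (e₀ : G.E) (g : ℝ → ℝ)
    (hgi : IntervalIntegrable g volume 0 (G.len e₀))
    (hg2 : MemLp g 2 (volume.restrict (Set.Ioc (0:ℝ) (G.len e₀))))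
    (hgz : (∫ s in (0:ℝ)..(G.len e₀), g s) = 0) : H1Fun G.toOrientedMetricGraph where
  val e s := if e = e₀ then ∫ t in (0:ℝ)..s, g t else 0
  dval e s := if e = e₀ then g s else 0
  repr := by
    intro e s _
    by_cases he : e = e₀ <;> simp [he]
  dval_int := by
    intro e
    by_cases he : e = e₀
    · simpa [he] using hgi
    · simp [he]
  dval_L2 := by
    intro e
    by_cases he : e = e₀
    · simpa [he] using hg2
    · simpa [he] using memLp_const (0:ℝ)
  consistent := by
    have hz : ∀ d : G.Dart, G.headVal (fun e s => if e = e₀ then ∫ t in (0:ℝ)..s, g t else 0) d = 0 := by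
      intro d
      unfold OrientedMetricGraph.headVal
      by_cases hd : d.2 <;> by_cases he : d.1 = e₀ <;> simp [hd, he, hgz]
    intro d₁ d₂ _
    rw [hz d₁, hz d₂]

/-- Piecewise-affine "hat" test function attached to the vertex `v`. -/
noncomputable def vertTest (v : G.V) : H1Fun G.toOrientedMetricGraph where
  val e s := (if G.src e = v then 1 else 0)
    + s * (((if G.tgt e = v then 1 else 0) - (if G.src e = v then 1 else 0)) / G.len e)
  dval e s := ((if G.tgt e = v then (1:ℝ) else 0) - (if G.src e = v then 1 else 0)) / G.len e
  repr := by
    intro e s _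
    by_cases h1 : G.tgt e = v <;> by_cases h2 : G.src e = v <;> simp [h1, h2] <;> ring
  dval_int := by intro e; exact intervalIntegrable_const
  dval_L2 := by intro e; exact memLp_const _
  consistent := by
    have hv : ∀ d : G.Dart, G.headVal (fun e s => (if G.src e = v then (1:ℝ) else 0)
        + s * (((if G.tgt e = v then 1 else 0) - (if G.src e = v then 1 else 0)) / G.len e)) d
        = (if G.dartHead d = v then 1 else 0) := by
      intro d
      unfold OrientedMetricGraph.headVal OrientedMetricGraph.dartHead
      have hne := (G.len_pos d.1).ne'
      by_cases hd : d.2 <;> simp [hd] <;> field_simp <;> ring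
    intro d₁ d₂ h
    rw [hv d₁, hv d₂, h]

/-- Mean of the field `t_i + φ_i'` over the edge `e`. -/
noncomputable def mean (i : Fin 2) (e : G.E) : ℝ :=
  (∫ s in (0:ℝ)..(G.len e), Ffield G φ i e s) / G.len e

/-- On each edge, a weak solution has constant field `t + φ'` (a.e.). -/
theorem forward_ae
    (hw : ∀ i : Fin 2, ∀ ψ : H1Fun G.toOrientedMetricGraph,
      (∑ e : G.E, ∫ s in (0:ℝ)..(G.len e), Ffield G φ i e s * ψ.dval e s) = 0)
    (i : Fin 2) (e : G.E) :
    ∀ᵐ s ∂(volume.restrict (Set.Ioc (0:ℝ) (G.len e))),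
      Ffield G φ i e s = mean G φ i e := by
  set L := G.len e with hLdef
  have hL : 0 < L := G.len_pos e
  set c := mean G φ i e with hc
  set g : ℝ → ℝ := fun s => Ffield G φ i e s - c with hg
  have hg2 : MemLp g 2 (volume.restrict (Set.Ioc (0:ℝ) L)) :=
    (Ffield_L2 G φ i e).sub (memLp_const c)
  have hgi : IntervalIntegrable g volume 0 L :=
    (Ffield_intInt G φ i e).sub intervalIntegrable_const
  have hgz : (∫ s in (0:ℝ)..L, g s) = 0 := by
    rw [hg]
    rw [intervalIntegral.integral_sub (Ffield_intInt G φ i e) intervalIntegrable_const]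
    simp [hc, mean, hL.ne']
    rw [mul_div_cancel_left₀ _ hL.ne', sub_self]
  have hψ := hw i (edgeTest G e g hgi hg2 hgz)
  have hsingle : (∫ s in (0:ℝ)..L, Ffield G φ i e s * g s) = 0 := by
    rw [Finset.sum_eq_single e] at hψ
    · convert hψ using 2 with s
      simp [edgeTest]
    · intro e' _ he'
      have : ∀ s, (edgeTest G e g hgi hg2 hgz).dval e' s = 0 := by
        intro s; simp [edgeTest, he']
      simp [this]
    · intro h; exact absurd (Finset.mem_univ e) h
  have expand : (∫ s in (0:ℝ)..L, Ffield G φ i e s * g s)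
      = (∫ s in (0:ℝ)..L, g s * g s) + c * ∫ s in (0:ℝ)..L, g s := by
    rw [← intervalIntegral.integral_const_mul,
      ← intervalIntegral.integral_add (mulIntInt hL.le hg2 hg2)
        (mulIntInt hL.le (memLp_const c) hg2)]
    apply intervalIntegral.integral_congr
    intro s _
    simp only [hg]
    ring
  have hsq : (∫ s in (0:ℝ)..L, g s * g s) = 0 := by
    rw [expand, hgz, mul_zero, add_zero] at hsingle
    exact hsingle
  have hgg : Integrable (fun s => g s * g s) (volume.restrict (Set.Ioc (0:ℝ) L)) :=
    (intervalIntegrable_iff_integrableOn_Ioc_of_le hL.le).mp (mulIntInt hL.le hg2 hg2)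
  rw [intervalIntegral.integral_of_le hL.le] at hsq
  have h0 : (fun s => g s * g s) =ᵐ[volume.restrict (Set.Ioc (0:ℝ) L)] 0 :=
    (integral_eq_zero_iff_of_nonneg (fun s => mul_self_nonneg (g s)) hgg).mp hsq
  filter_upwards [h0] with s hs
  have hgs : g s = 0 := by simpa using hs
  rw [hg] at hgs
  simpa [sub_eq_zero] using hgs

/-- a.e. constancy gives linear primitive. -/
theorem integral_of_ae {c : ℝ} {e : G.E} {i : Fin 2}
    (hae : ∀ᵐ s ∂(volume.restrict (Set.Ioc (0:ℝ) (G.len e))), Ffield G φ i e s = c) :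
    ∀ s ∈ Set.Icc (0:ℝ) (G.len e), (∫ t in (0:ℝ)..s, Ffield G φ i e t) = s * c := by
  intro s hs
  rw [intervalIntegral.integral_of_le hs.1]
  have hsub : Set.Ioc (0:ℝ) s ⊆ Set.Ioc (0:ℝ) (G.len e) :=
    Set.Ioc_subset_Ioc le_rfl hs.2
  have hae' : ∀ᵐ t ∂(volume.restrict (Set.Ioc (0:ℝ) s)), Ffield G φ i e t = c :=
    ae_restrict_of_ae_restrict_of_subset hsub hae
  have hcongr : (∫ x in Set.Ioc (0:ℝ) s, Ffield G φ i e x)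
      = ∫ _x in Set.Ioc (0:ℝ) s, c := integral_congr_ae hae'
  rw [hcongr]
  simp [Real.volume_Ioc, ENNReal.toReal_ofReal hs.1, mul_comm]
  exact Or.inl hs.1

/-- linear primitive gives a.e. constancy (du Bois-Reymond). -/
theorem ae_of_integral {c : ℝ} {e : G.E} {i : Fin 2}
    (hint : ∀ s ∈ Set.Icc (0:ℝ) (G.len e), (∫ t in (0:ℝ)..s, Ffield G φ i e t) = s * c) :
    ∀ᵐ s ∂(volume.restrict (Set.Ioc (0:ℝ) (G.len e))), Ffield G φ i e s = c := by
  have hL : (0:ℝ) ≤ G.len e := (G.len_pos e).le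
  have h := dubois hL (h := fun s => Ffield G φ i e s - c)
    ((Ffield_intInt G φ i e).sub intervalIntegrable_const) ?_
  · filter_upwards [h] with s hs
    linarith [hs]
  · intro s hs
    have h1 : IntervalIntegrable (Ffield G φ i e) volume 0 s := by
      apply (Ffield_intInt G φ i e).mono_set
      rw [Set.uIcc_of_le hs.1, Set.uIcc_of_le hL]
      exact Set.Icc_subset_Icc le_rfl hs.2
    rw [intervalIntegral.integral_sub h1 intervalIntegrable_const, hint s hs]
    simp [mul_comm]

theorem subInt {X : Type*} [NormedAddCommGroup X] {e : G.E} {s : ℝ}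
    (hs : s ∈ Set.Icc (0:ℝ) (G.len e)) {f : ℝ → X}
    (hf : IntervalIntegrable f volume 0 (G.len e)) :
    IntervalIntegrable f volume 0 s := by
  apply hf.mono_set
  rw [Set.uIcc_of_le hs.1, Set.uIcc_of_le (G.len_pos e).le]
  exact Set.Icc_subset_Icc le_rfl hs.2

theorem tangComp_intInt (i : Fin 2) (e : G.E) :
    IntervalIntegrable (G.tangComp i e) volume 0 (G.len e) :=
  intervalIntegrable_of_memL2 (G.len_pos e).le (tangComp_L2 G i e)

theorem val_emb_decomp (i : Fin 2) (e : G.E) {s : ℝ} (hs : s ∈ Set.Icc (0:ℝ) (G.len e)) :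
    (φ i).val e s + (if i = 0 then (G.emb e s).1 else (G.emb e s).2)
      = (φ i).val e 0 + (if i = 0 then (G.emb e 0).1 else (G.emb e 0).2)
        + ∫ t in (0:ℝ)..s, Ffield G φ i e t := by
  have htang : IntervalIntegrable (G.tang e) volume 0 s := subInt G hs (G.tang_int e)
  have hdval : IntervalIntegrable ((φ i).dval e) volume 0 s :=
    subInt G hs ((φ i).dval_int e)
  have htc : IntervalIntegrable (G.tangComp i e) volume 0 s :=
    subInt G hs (tangComp_intInt G i e)
  have hsplit : (∫ t in (0:ℝ)..s, Ffield G φ i e t)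
      = (∫ t in (0:ℝ)..s, (φ i).dval e t) + ∫ t in (0:ℝ)..s, G.tangComp i e t := by
    rw [← intervalIntegral.integral_add hdval htc]
    rfl
  have hembc : (if i = 0 then (G.emb e s).1 else (G.emb e s).2)
      = (if i = 0 then (G.emb e 0).1 else (G.emb e 0).2)
        + ∫ t in (0:ℝ)..s, G.tangComp i e t := by
    have hrep := G.emb_rep e s hs
    by_cases hi : i = 0
    · have h1 := congrArg Prod.fst hrep
      simp only [Prod.fst_add] at h1
      rw [hi]
      simp only [if_true]
      rw [h1]
      congr 1
      have := (ContinuousLinearMap.fst ℝ ℝ ℝ).intervalIntegral_comp_comm htang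
      simp only [ContinuousLinearMap.coe_fst'] at this
      rw [← this]
      simp [CellGraph.tangComp]
    · have h1 := congrArg Prod.snd hrep
      simp only [Prod.snd_add] at h1
      simp only [hi, if_false]
      rw [h1]
      congr 1
      have := (ContinuousLinearMap.snd ℝ ℝ ℝ).intervalIntegral_comp_comm htang
      simp only [ContinuousLinearMap.coe_snd'] at this
      rw [← this]
      simp [CellGraph.tangComp, hi]
  rw [(φ i).repr e s hs, hsplit, hembc]
  ring

theorem affine_iff (e : G.E) (c : ℝ × ℝ) :
    (∀ s ∈ Set.Icc (0:ℝ) (G.len e),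
      (((φ 0).val e s + (G.emb e s).1, (φ 1).val e s + (G.emb e s).2) : ℝ × ℝ)
        = ((φ 0).val e 0 + (G.emb e 0).1, (φ 1).val e 0 + (G.emb e 0).2) + s • c)
    ↔ (∀ s ∈ Set.Icc (0:ℝ) (G.len e),
        (∫ t in (0:ℝ)..s, Ffield G φ 0 e t) = s * c.1 ∧
        (∫ t in (0:ℝ)..s, Ffield G φ 1 e t) = s * c.2) := by
  refine forall₂_congr fun s hs => ?_
  have h0 := val_emb_decomp G φ 0 e hs
  have h1 := val_emb_decomp G φ 1 e hs
  simp only [if_true, eq_self_iff_true] at h0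
  have hne : (1 : Fin 2) ≠ 0 := by decide
  simp only [hne, if_false] at h1
  rw [Prod.ext_iff]
  simp only [Prod.fst_add, Prod.snd_add, Prod.smul_fst, Prod.smul_snd, smul_eq_mul]
  constructor
  · rintro ⟨ha, hb⟩
    constructor <;> [linarith [h0, ha]; linarith [h1, hb]]
  · rintro ⟨ha, hb⟩
    constructor <;> [linarith [h0, ha]; linarith [h1, hb]]

/-- Scalar Kirchhoff condition for the means, from the weak formulation. -/
theorem kirchhoff_scalar
    (hw : ∀ i : Fin 2, ∀ ψ : H1Fun G.toOrientedMetricGraph,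
      (∑ e : G.E, ∫ s in (0:ℝ)..(G.len e), Ffield G φ i e s * ψ.dval e s) = 0)
    (i : Fin 2) (v : G.V) :
    (∑ e : G.E, if G.tgt e = v then mean G φ i e else 0)
      - (∑ e : G.E, if G.src e = v then mean G φ i e else 0) = 0 := by
  have h := hw i (vertTest G v)
  have hterm : ∀ e : G.E,
      (∫ s in (0:ℝ)..(G.len e), Ffield G φ i e s * (vertTest G v).dval e s)
        = (if G.tgt e = v then mean G φ i e else 0)
          - (if G.src e = v then mean G φ i e else 0) := by
    intro e
    have hL := G.len_pos e
    have hc : ∀ s : ℝ, (vertTest G v).dval e s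
        = ((if G.tgt e = v then (1:ℝ) else 0) - (if G.src e = v then 1 else 0)) / G.len e := by
      intro s; rfl
    simp only [hc]
    rw [intervalIntegral.integral_mul_const]
    have hmean : (∫ s in (0:ℝ)..(G.len e), Ffield G φ i e s) = mean G φ i e * G.len e := by
      rw [mean]; field_simp
    rw [hmean]
    by_cases h1 : G.tgt e = v <;> by_cases h2 : G.src e = v <;>
      simp [h1, h2] <;> field_simp <;> ring
  rw [Finset.sum_congr rfl (fun e _ => hterm e), Finset.sum_sub_distrib] at h
  exact h

/-- A well-defined value of a vertex-consistent function at a vertex. -/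
noncomputable def vertexVal (ψ : H1Fun G.toOrientedMetricGraph) (v : G.V) : ℝ :=
  if h : ∃ d : G.Dart, G.dartHead d = v then G.headVal ψ.val h.choose else 0

theorem vertexVal_spec (ψ : H1Fun G.toOrientedMetricGraph) (d : G.Dart) :
    G.headVal ψ.val d = vertexVal G ψ (G.dartHead d) := by
  unfold vertexVal
  have hex : ∃ d' : G.Dart, G.dartHead d' = G.dartHead d := ⟨d, rfl⟩
  rw [dif_pos hex]
  exact ψ.consistent d hex.choose hex.choose_spec.symm

theorem vertexVal_tgt (ψ : H1Fun G.toOrientedMetricGraph) (e : G.E) :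
    ψ.val e (G.len e) = vertexVal G ψ (G.tgt e) := by
  have := vertexVal_spec G ψ (e, true)
  simpa [OrientedMetricGraph.headVal, OrientedMetricGraph.dartHead] using this

theorem vertexVal_src (ψ : H1Fun G.toOrientedMetricGraph) (e : G.E) :
    ψ.val e 0 = vertexVal G ψ (G.src e) := by
  have := vertexVal_spec G ψ (e, false)
  simpa [OrientedMetricGraph.headVal, OrientedMetricGraph.dartHead] using this

/-- Telescoping sum over edges against a vertex function, under Kirchhoff. -/
theorem sum_telescope (c : G.E → ℝ) (Ψ : G.V → ℝ)
    (hk : ∀ v : G.V, (∑ e : G.E, if G.tgt e = v then c e else 0)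
      - (∑ e : G.E, if G.src e = v then c e else 0) = 0) :
    ∑ e : G.E, c e * (Ψ (G.tgt e) - Ψ (G.src e)) = 0 := by
  have h1 : ∀ w : G.E → G.V, (∑ e : G.E, c e * Ψ (w e))
      = ∑ v : G.V, Ψ v * ∑ e : G.E, if w e = v then c e else 0 := by
    intro w
    have he : ∀ e : G.E, c e * Ψ (w e)
        = ∑ v : G.V, if w e = v then c e * Ψ v else 0 := by
      intro e
      rw [Finset.sum_ite_eq]
      simp
    rw [Finset.sum_congr rfl (fun e _ => he e), Finset.sum_comm]
    refine Finset.sum_congr rfl fun v _ => ?_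
    rw [Finset.mul_sum]
    refine Finset.sum_congr rfl fun e _ => ?_
    by_cases h : w e = v <;> simp [h] <;> ring
  have expand : (∑ e : G.E, c e * (Ψ (G.tgt e) - Ψ (G.src e)))
      = (∑ e : G.E, c e * Ψ (G.tgt e)) - ∑ e : G.E, c e * Ψ (G.src e) := by
    rw [← Finset.sum_sub_distrib]
    refine Finset.sum_congr rfl fun e _ => by ring
  rw [expand, h1 G.tgt, h1 G.src, ← Finset.sum_sub_distrib]
  have : ∀ v : G.V, Ψ v * (∑ e : G.E, if G.tgt e = v then c e else 0)
      - Ψ v * (∑ e : G.E, if G.src e = v then c e else 0) = 0 := by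
    intro v
    rw [← mul_sub, hk v, mul_zero]
  rw [Finset.sum_congr rfl (fun v _ => this v), Finset.sum_const_zero]

/-- Evaluation of an edge term when the field is a.e. constant. -/
theorem edge_term_eval {i : Fin 2} {e : G.E} {c : ℝ}
    (hae : ∀ᵐ s ∂(volume.restrict (Set.Ioc (0:ℝ) (G.len e))), Ffield G φ i e s = c)
    (ψ : H1Fun G.toOrientedMetricGraph) :
    (∫ s in (0:ℝ)..(G.len e), Ffield G φ i e s * ψ.dval e s)
      = c * (vertexVal G ψ (G.tgt e) - vertexVal G ψ (G.src e)) := by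
  have hL := (G.len_pos e).le
  rw [intervalIntegral.integral_of_le hL]
  have hcongr : (fun s => Ffield G φ i e s * ψ.dval e s)
      =ᵐ[volume.restrict (Set.Ioc (0:ℝ) (G.len e))] fun s => c * ψ.dval e s := by
    filter_upwards [hae] with s hs
    rw [hs]
  rw [integral_congr_ae hcongr]
  have : (∫ s in Set.Ioc (0:ℝ) (G.len e), c * ψ.dval e s)
      = c * ∫ s in Set.Ioc (0:ℝ) (G.len e), ψ.dval e s := by rw [MeasureTheory.integral_const_mul]
  rw [this, ← intervalIntegral.integral_of_le hL]
  have hrep := ψ.repr e (G.len e) ⟨hL, le_rfl⟩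
  rw [vertexVal_tgt G ψ e, vertexVal_src G ψ e] at hrep
  rw [show (∫ s in (0:ℝ)..(G.len e), ψ.dval e s)
    = vertexVal G ψ (G.tgt e) - vertexVal G ψ (G.src e) by linarith [hrep]]

end GraphAux

/-- `φ = (φ₀, φ₁) ∈ (H¹_♯(Γ_Y))²` solves the canonical cell
problem if and only if (i) on each edge, `s ↦ φ(γ_e(s)) + γ_e(s)` is affine
(with some slope `b_e ∈ ℝ²`), and (ii) at every vertex the Kirchhoff junction
condition holds: the sum of the slopes over edges ending at the vertex minus
the sum over edges starting at the vertex vanishes. -/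
theorem solvesCanonical_iff_affine_kirchhoff (G : CellGraph)
    (φ : Fin 2 → H1Fun G.toOrientedMetricGraph) :
    G.SolvesCanonical φ ↔
      ∃ slope : G.E → ℝ × ℝ,
        (∀ e : G.E, ∀ s ∈ Set.Icc (0:ℝ) (G.len e),
          (((φ 0).val e s + (G.emb e s).1, (φ 1).val e s + (G.emb e s).2) : ℝ × ℝ)
            = ((φ 0).val e 0 + (G.emb e 0).1, (φ 1).val e 0 + (G.emb e 0).2)
              + s • slope e) ∧
        (∀ v : G.V,
          (∑ e : G.E, if G.tgt e = v then slope e else 0)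
            - (∑ e : G.E, if G.src e = v then slope e else 0) = 0) := by
  constructor
  · intro hs
    rw [weak_iff] at hs
    refine ⟨fun e => (mean G φ 0 e, mean G φ 1 e), ?_, ?_⟩
    · intro e
      exact (affine_iff G φ e _).mpr fun s hs' =>
        ⟨integral_of_ae G φ (forward_ae G φ hs 0 e) s hs',
         integral_of_ae G φ (forward_ae G φ hs 1 e) s hs'⟩
    · intro v
      have h0 := kirchhoff_scalar G φ hs 0 v
      have h1 := kirchhoff_scalar G φ hs 1 v
      rw [Prod.ext_iff]
      constructor
      · simpa [Prod.fst_sub, Prod.fst_sum, apply_ite Prod.fst] using h0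
      · simpa [Prod.snd_sub, Prod.snd_sum, apply_ite Prod.snd] using h1
  · rintro ⟨slope, haff, hk⟩
    rw [weak_iff]
    intro i ψ
    have key : ∀ (j : Fin 2) (cj : G.E → ℝ),
        (∀ e : G.E, ∀ s ∈ Set.Icc (0:ℝ) (G.len e),
          (∫ t in (0:ℝ)..s, Ffield G φ j e t) = s * cj e) →
        (∀ v : G.V, (∑ e : G.E, if G.tgt e = v then cj e else 0)
          - (∑ e : G.E, if G.src e = v then cj e else 0) = 0) →
        (∑ e : G.E, ∫ s in (0:ℝ)..(G.len e), Ffield G φ j e s * ψ.dval e s) = 0 := by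
      intro j cj hintj hkj
      have hterm : ∀ e : G.E,
          (∫ s in (0:ℝ)..(G.len e), Ffield G φ j e s * ψ.dval e s)
            = cj e * (vertexVal G ψ (G.tgt e) - vertexVal G ψ (G.src e)) := fun e =>
        edge_term_eval G φ (ae_of_integral G φ (hintj e)) ψ
      rw [Finset.sum_congr rfl fun e _ => hterm e]
      exact sum_telescope G cj (vertexVal G ψ) hkj
    have hk0 : ∀ v : G.V, (∑ e : G.E, if G.tgt e = v then (slope e).1 else 0)
        - (∑ e : G.E, if G.src e = v then (slope e).1 else 0) = 0 := by
      intro v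
      have := congrArg Prod.fst (hk v)
      simpa [Prod.fst_sub, Prod.fst_sum, apply_ite Prod.fst] using this
    have hk1 : ∀ v : G.V, (∑ e : G.E, if G.tgt e = v then (slope e).2 else 0)
        - (∑ e : G.E, if G.src e = v then (slope e).2 else 0) = 0 := by
      intro v
      have := congrArg Prod.snd (hk v)
      simpa [Prod.snd_sub, Prod.snd_sum, apply_ite Prod.snd] using this
    fin_cases i
    · exact key 0 (fun e => (slope e).1)
        (fun e s hs => ((affine_iff G φ e (slope e)).mp (haff e) s hs).1) hk0
    · exact key 1 (fun e => (slope e).2)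
        (fun e s hs => ((affine_iff G φ e (slope e)).mp (haff e) s hs).2) hk1
end

section
/- For the 'rhombus' unit-cell pattern with a vertical line through the center and two diagonals crossing at angle 2φ (φ ∈ (0, π/4)), consisting of two edges of length 1/2 and four edges of length 1/(2 cos φ), the homogenized tensor is A_hom = (cos φ)/(cos φ + 2) · diag(2 cos φ, 1). In particular A_hom is diagonal but not a scalar multiple of the identity for any φ ∈ (0, π/4). -/
open Matrix Real

set_option maxHeartbeats 1000000 in
/-- For the 'rhombus' unit-cell pattern (a vertical line
through the center and two diagonals crossing at angle `2φ`, `φ ∈ (0, π/4)`;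
two edges of length `1/2` and four of length `1/(2 cos φ)`), any solution
`(b, Q)` of the algebraic system `L b + A_Iᵀ Q = f`, `A_I b = 0` yields the
homogenized tensor
`A_hom = (1/|Γ_Y|) Σ_j ℓ_j b_j b_jᵀ = (cos φ/(cos φ + 2)) diag(2 cos φ, 1)`,
with `|Γ_Y| = 1 + 2/cos φ`. In particular `A_hom` is diagonal but not a
scalar multiple of the identity. -/
theorem Ahom_rhombus_pattern (φ : ℝ) (hφ : φ ∈ Set.Ioo 0 (Real.pi / 4))
    (ℓ : Fin 6 → ℝ)
    (hℓ : ℓ = ![1 / (2 * Real.cos φ), 1 / (2 * Real.cos φ), 1/2,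
      1 / (2 * Real.cos φ), 1 / (2 * Real.cos φ), 1/2])
    (A : Matrix (Fin 4 × Fin 2) (Fin 6 × Fin 2) ℝ)
    (hA : A = Matrix.of fun p q =>
      (!![-1, 0, 0, 1, 0, 0; 0, -1, 0, 0, 1, 0; 0, 0, -1, 0, 0, 1;
          1, 1, 1, -1, -1, -1] : Matrix (Fin 4) (Fin 6) ℝ)
          p.1 q.1 * (if p.2 = q.2 then (1:ℝ) else 0))
    (f : Fin 6 × Fin 2 → ℝ)
    (hf : f = fun q => if q = (0, 0) then (-1:ℝ) else if q = (1, 0) then -1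
      else if q = (2, 1) then 1 else 0)
    (b : Fin 6 × Fin 2 → ℝ) (Q : Fin 4 × Fin 2 → ℝ)
    (hsys₁ : (fun q => ℓ q.1 * b q) + Aᵀ.mulVec Q = f)
    (hsys₂ : A.mulVec b = 0) :
    (Matrix.of fun k l : Fin 2 =>
        (1 / (1 + 2 / Real.cos φ)) * ∑ j : Fin 6, ℓ j * b (j, k) * b (j, l))
      = (Real.cos φ / (Real.cos φ + 2)) •
          Matrix.diagonal ![2 * Real.cos φ, 1] ∧
    ∀ c : ℝ, (Matrix.of fun k l : Fin 2 =>
        (1 / (1 + 2 / Real.cos φ)) * ∑ j : Fin 6, ℓ j * b (j, k) * b (j, l))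
      ≠ c • (1 : Matrix (Fin 2) (Fin 2) ℝ) := by
  obtain ⟨hφ0, hφ4⟩ := hφ
  have hπ := Real.pi_pos
  have hc : 0 < Real.cos φ := Real.cos_pos_of_mem_Ioo ⟨by linarith, by linarith⟩
  have hc2 : Real.cos φ > 1/2 := by
    have h1 : Real.cos (Real.pi/4) < Real.cos φ :=
      Real.cos_lt_cos_of_nonneg_of_le_pi (le_of_lt hφ0) (by linarith) hφ4
    rw [Real.cos_pi_div_four] at h1
    nlinarith [Real.sq_sqrt (by norm_num : (0:ℝ) ≤ 2), Real.sqrt_nonneg 2]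
  subst hℓ hA hf
  have e00 := congrFun hsys₁ (0,0)
  have e10 := congrFun hsys₁ (1,0)
  have e20 := congrFun hsys₁ (2,0)
  have e30 := congrFun hsys₁ (3,0)
  have e40 := congrFun hsys₁ (4,0)
  have e50 := congrFun hsys₁ (5,0)
  have e01 := congrFun hsys₁ (0,1)
  have e11 := congrFun hsys₁ (1,1)
  have e21 := congrFun hsys₁ (2,1)
  have e31 := congrFun hsys₁ (3,1)
  have e41 := congrFun hsys₁ (4,1)
  have e51 := congrFun hsys₁ (5,1)
  have n00 := congrFun hsys₂ (0,0)
  have n10 := congrFun hsys₂ (1,0)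
  have n20 := congrFun hsys₂ (2,0)
  have n01 := congrFun hsys₂ (0,1)
  have n11 := congrFun hsys₂ (1,1)
  have n21 := congrFun hsys₂ (2,1)
  simp [Matrix.mulVec, Matrix.transpose_apply, dotProduct, Fintype.sum_prod_type,
    Fin.sum_univ_six, Fin.sum_univ_four, Fin.sum_univ_two, Pi.add_apply, Prod.ext_iff,
    show ((![(-1:ℝ),0,0,1,0,0]:Fin 6→ℝ) 4) = 0 from rfl,
    show ((![(-1:ℝ),0,0,1,0,0]:Fin 6→ℝ) 5) = 0 from rfl,
    show ((![(0:ℝ),-1,0,0,1,0]:Fin 6→ℝ) 4) = 1 from rfl,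
    show ((![(0:ℝ),-1,0,0,1,0]:Fin 6→ℝ) 5) = 0 from rfl,
    show ((![(0:ℝ),0,-1,0,0,1]:Fin 6→ℝ) 4) = 0 from rfl,
    show ((![(0:ℝ),0,-1,0,0,1]:Fin 6→ℝ) 5) = 1 from rfl,
    show ((![(1:ℝ),1,1,-1,-1,-1]:Fin 6→ℝ) 4) = -1 from rfl,
    show ((![(1:ℝ),1,1,-1,-1,-1]:Fin 6→ℝ) 5) = -1 from rfl,
    show ((![1 / (2 * Real.cos φ), 1 / (2 * Real.cos φ), 1/2,
      1 / (2 * Real.cos φ), 1 / (2 * Real.cos φ), 1/2]:Fin 6→ℝ) 4) = 1/(2*Real.cos φ) from rfl,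
    show ((![1 / (2 * Real.cos φ), 1 / (2 * Real.cos φ), 1/2,
      1 / (2 * Real.cos φ), 1 / (2 * Real.cos φ), 1/2]:Fin 6→ℝ) 5) = 1/2 from rfl]
    at e00 e10 e20 e30 e40 e50 e01 e11 e21 e31 e41 e51 n00 n10 n20 n01 n11 n21
  have hb30 : b (3,0) = b (0,0) := by linarith
  have hb40 : b (4,0) = b (1,0) := by linarith
  have hb50 : b (5,0) = b (2,0) := by linarith
  have hb31 : b (3,1) = b (0,1) := by linarith
  have hb41 : b (4,1) = b (1,1) := by linarith
  have hb51 : b (5,1) = b (2,1) := by linarith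
  have hb00 : b (0,0) = -Real.cos φ := by
    have h : (Real.cos φ)⁻¹ * 2⁻¹ * (b (0,0) + b (3,0)) = -1 := by linear_combination e00 + e30
    rw [hb30] at h; field_simp [hc.ne'] at h; linarith
  have hb10 : b (1,0) = -Real.cos φ := by
    have h : (Real.cos φ)⁻¹ * 2⁻¹ * (b (1,0) + b (4,0)) = -1 := by linear_combination e10 + e40
    rw [hb40] at h; field_simp [hc.ne'] at h; linarith
  have hb20 : b (2,0) = 0 := by
    have h : 2⁻¹ * (b (2,0) + b (5,0)) = 0 := by linear_combination e20 + e50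
    rw [hb50] at h; linarith
  have hb01 : b (0,1) = 0 := by
    have h : (Real.cos φ)⁻¹ * 2⁻¹ * (b (0,1) + b (3,1)) = 0 := by linear_combination e01 + e31
    rw [hb31] at h; field_simp [hc.ne'] at h; linarith
  have hb11 : b (1,1) = 0 := by
    have h : (Real.cos φ)⁻¹ * 2⁻¹ * (b (1,1) + b (4,1)) = 0 := by linear_combination e11 + e41
    rw [hb41] at h; field_simp [hc.ne'] at h; linarith
  have hb21 : b (2,1) = 1 := by
    have h : 2⁻¹ * (b (2,1) + b (5,1)) = 1 := by linear_combination e21 + e51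
    rw [hb51] at h; linarith
  have hmain : (Matrix.of fun k l : Fin 2 =>
        (1 / (1 + 2 / Real.cos φ)) * ∑ j : Fin 6,
          (![1 / (2 * Real.cos φ), 1 / (2 * Real.cos φ), 1/2,
            1 / (2 * Real.cos φ), 1 / (2 * Real.cos φ), 1/2] : Fin 6 → ℝ) j * b (j, k) * b (j, l))
      = (Real.cos φ / (Real.cos φ + 2)) • Matrix.diagonal ![2 * Real.cos φ, 1] := by
    have hne : Real.cos φ ≠ 0 := ne_of_gt hc
    have hne2 : Real.cos φ + 2 ≠ 0 := by linarith
    ext k l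
    fin_cases k <;> fin_cases l <;>
      simp [Fin.sum_univ_six, Matrix.diagonal, hb30, hb40, hb50, hb31, hb41, hb51,
        hb00, hb10, hb20, hb01, hb11, hb21,
        show ((![1 / (2 * Real.cos φ), 1 / (2 * Real.cos φ), 1/2,
          1 / (2 * Real.cos φ), 1 / (2 * Real.cos φ), 1/2]:Fin 6→ℝ) 4) = 1/(2*Real.cos φ) from rfl,
        show ((![1 / (2 * Real.cos φ), 1 / (2 * Real.cos φ), 1/2,
          1 / (2 * Real.cos φ), 1 / (2 * Real.cos φ), 1/2]:Fin 6→ℝ) 5) = 1/2 from rfl,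
        show ((![(Real.cos φ)⁻¹ * 2⁻¹, (Real.cos φ)⁻¹ * 2⁻¹, 2⁻¹,
          (Real.cos φ)⁻¹ * 2⁻¹, (Real.cos φ)⁻¹ * 2⁻¹, 2⁻¹]:Fin 6→ℝ) 4) = (Real.cos φ)⁻¹ * 2⁻¹ from rfl,
        show ((![(Real.cos φ)⁻¹ * 2⁻¹, (Real.cos φ)⁻¹ * 2⁻¹, 2⁻¹,
          (Real.cos φ)⁻¹ * 2⁻¹, (Real.cos φ)⁻¹ * 2⁻¹, 2⁻¹]:Fin 6→ℝ) 5) = 2⁻¹ from rfl] <;>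
      field_simp <;> ring
  refine ⟨hmain, ?_⟩
  intro c0 hcon
  rw [hmain] at hcon
  have hne2 : Real.cos φ + 2 ≠ 0 := by linarith
  have h0 : Real.cos φ / (Real.cos φ + 2) * (2 * Real.cos φ) = c0 := by
    have := congrFun (congrFun hcon 0) 0
    simpa [Matrix.diagonal] using this
  have h1 : Real.cos φ / (Real.cos φ + 2) * 1 = c0 := by
    have := congrFun (congrFun hcon 1) 1
    simpa [Matrix.diagonal] using this
  field_simp at h0 h1
  nlinarith [h0, h1, hc, hc2]
end

section
/- For the 'zigzag' unit-cell pattern consisting of three edges: from (0, 1/2) to (1/2, 0) (length √2/2), from (1/2, 0) to (1/2, 1) (length 1, a loop in the periodic graph), and from (1/2, 1) to (1, 1/2) (length √2/2), the homogenized tensor equals A_hom = 1/(1+√2) · [[√2/2, −√2/2], [−√2/2, √2/2 + 1]], which is symmetric positive definite and not diagonal. -/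
open Matrix

set_option maxHeartbeats 2000000 in
/-- For the 'zigzag' unit-cell pattern (edges from
`(0,1/2)` to `(1/2,0)` of length `√2/2`, from `(1/2,0)` to `(1/2,1)` of
length `1` — a loop in the periodic graph — and from `(1/2,1)` to `(1,1/2)`
of length `√2/2`), any solution `(b, Q)` of the algebraic system
`L b + A_Iᵀ Q = f`, `A_I b = 0` yields the homogenized tensor
`A_hom = (1/(1+√2)) [[√2/2, −√2/2], [−√2/2, √2/2 + 1]]`, with
`|Γ_Y| = 1 + √2`; `A_hom` is symmetric positive definite and not
diagonal. -/
theorem Ahom_zigzag_pattern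
    (ℓ : Fin 3 → ℝ) (hℓ : ℓ = ![Real.sqrt 2 / 2, 1, Real.sqrt 2 / 2])
    (A : Matrix (Fin 2 × Fin 2) (Fin 3 × Fin 2) ℝ)
    (hA : A = Matrix.of fun p q =>
      (!![-1, 0, 1; 1, 0, -1] : Matrix (Fin 2) (Fin 3) ℝ)
          p.1 q.1 * (if p.2 = q.2 then (1:ℝ) else 0))
    (f : Fin 3 × Fin 2 → ℝ)
    (hf : f = fun q => if q = (1, 1) then (1:ℝ) else if q = (2, 0) then 1
      else if q = (2, 1) then -1 else 0)
    (b : Fin 3 × Fin 2 → ℝ) (Q : Fin 2 × Fin 2 → ℝ)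
    (hsys₁ : (fun q => ℓ q.1 * b q) + Aᵀ.mulVec Q = f)
    (hsys₂ : A.mulVec b = 0) :
    (Matrix.of fun k l : Fin 2 =>
        (1 / (1 + Real.sqrt 2)) * ∑ j : Fin 3, ℓ j * b (j, k) * b (j, l))
      = (1 / (1 + Real.sqrt 2)) •
          !![Real.sqrt 2 / 2, -(Real.sqrt 2) / 2;
             -(Real.sqrt 2) / 2, Real.sqrt 2 / 2 + 1] ∧
    (Matrix.of fun k l : Fin 2 =>
        (1 / (1 + Real.sqrt 2)) * ∑ j : Fin 3, ℓ j * b (j, k) * b (j, l)).PosDef ∧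
    (Matrix.of fun k l : Fin 2 =>
        (1 / (1 + Real.sqrt 2)) * ∑ j : Fin 3, ℓ j * b (j, k) * b (j, l)) 0 1 ≠ 0 := by
  have hs : Real.sqrt 2 * Real.sqrt 2 = 2 := Real.mul_self_sqrt (by norm_num)
  have hs0 : (0:ℝ) < Real.sqrt 2 := Real.sqrt_pos.mpr (by norm_num)
  set s := Real.sqrt 2 with hsdef
  -- extract the scalar equations
  have e10 := congrFun hsys₁ (0,0)
  have e11 := congrFun hsys₁ (0,1)
  have e20 := congrFun hsys₁ (1,0)
  have e21 := congrFun hsys₁ (1,1)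
  have e30 := congrFun hsys₁ (2,0)
  have e31 := congrFun hsys₁ (2,1)
  have g0 := congrFun hsys₂ (0,0)
  have g1 := congrFun hsys₂ (0,1)
  simp only [hℓ, hA, hf, Pi.add_apply, Matrix.mulVec, dotProduct,
    Fintype.sum_prod_type, Fin.sum_univ_two, Fin.sum_univ_three,
    Matrix.transpose_apply, Matrix.of_apply, Matrix.cons_val', Matrix.cons_val_zero,
    Matrix.cons_val_one, Matrix.head_cons, Matrix.head_fin_const, Matrix.cons_val_fin_one,
    Matrix.empty_val', Pi.zero_apply, Prod.mk.injEq] at e10 e11 e20 e21 e30 e31 g0 g1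
  simp [-Prod.mk_zero_zero, -Prod.mk_one_one] at e10 e11 e20 e21 e30 e31 g0 g1
  -- solve for b
  have hb20 : b (1,0) = 0 := e20
  have hb21 : b (1,1) = 1 := e21
  have h1 : s * b (0,0) = 1 := by linear_combination e10 + e30 - (s/2) * g0
  have hb00 : b (0,0) = s / 2 := by linear_combination (s * h1 - b (0,0) * hs) / 2
  have hb30 : b (2,0) = s / 2 := by linear_combination g0 + hb00
  have h2 : s * b (0,1) = -1 := by linear_combination e11 + e31 - (s/2) * g1
  have hb01 : b (0,1) = -(s / 2) := by linear_combination (s * h2 - b (0,1) * hs) / 2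
  have hb31 : b (2,1) = -(s / 2) := by linear_combination g1 + hb01
  have hM : (Matrix.of fun k l : Fin 2 =>
        (1 / (1 + s)) * ∑ j : Fin 3, ℓ j * b (j, k) * b (j, l))
      = (1 / (1 + s)) • !![s / 2, -s / 2; -s / 2, s / 2 + 1] := by
    ext k l
    fin_cases k <;> fin_cases l <;>
      simp [hℓ, Fin.sum_univ_three, hb00, hb01, hb20, hb21, hb30, hb31,
        Matrix.smul_apply, -Prod.mk_zero_zero, -Prod.mk_one_one] <;>
      first
        | rfl
        | (first
            | linear_combination (s / 4) * (1 / (1 + s)) * hs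
            | linear_combination (-(s / 4)) * (1 / (1 + s)) * hs
            | (left; first
                | linear_combination (s / 4) * hs
                | linear_combination (-(s / 4)) * hs)
            | ring)
  refine ⟨hM, ?_, ?_⟩
  · rw [hM, Matrix.posDef_iff_dotProduct_mulVec]
    constructor
    · ext i j
      fin_cases i <;> fin_cases j <;> simp [Matrix.smul_apply]
    · intro x hx
      have hx' : x 0 ≠ 0 ∨ x 1 ≠ 0 := by
        by_contra h
        push_neg at h
        exact hx (funext fun i => by fin_cases i <;> simp [h.1, h.2])
      have hval : (star x) ⬝ᵥ ((1 / (1 + s)) • !![s / 2, -s / 2; -s / 2, s / 2 + 1]).mulVec x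
          = (1 / (1 + s)) * ((s/2) * (x 0 - x 1)^2 + (x 1)^2) := by
        simp [Matrix.mulVec, dotProduct, Fin.sum_univ_two, Matrix.smul_apply]
        ring
      rw [hval]
      have hpos : (0:ℝ) < 1 / (1 + s) := by positivity
      have hq : (0:ℝ) < (s/2) * (x 0 - x 1)^2 + (x 1)^2 := by
        rcases hx' with h | h
        · rcases eq_or_ne (x 1) 0 with h1 | h1
          · have h0 : (0:ℝ) < x 0 ^ 2 := pow_two_pos_of_ne_zero h
            rw [h1]
            nlinarith [mul_pos hs0 h0]
          · have h1' : (0:ℝ) < x 1 ^ 2 := pow_two_pos_of_ne_zero h1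
            nlinarith [mul_nonneg hs0.le (sq_nonneg (x 0 - x 1))]
        · have h1' : (0:ℝ) < x 1 ^ 2 := pow_two_pos_of_ne_zero h
          nlinarith [mul_nonneg hs0.le (sq_nonneg (x 0 - x 1))]
      exact mul_pos hpos hq
  · rw [hM]
    simp [Matrix.smul_apply]
    constructor
    · intro h; nlinarith
    · intro h; nlinarith
end

section
/- Let f ∈ L²(0,T; L²(Γ_Y; C(Ω̄))) and define f^δ(t,x) = f(t, x, x/δ) on (0,T) × Γ^δ. Then for every admissible period δ > 0, f^δ ∈ L²(0,T; L²(Γ^δ)) and δ ‖f^δ‖²_{L²(0,T;L²(Γ^δ))} ≤ |Ω| ‖f‖²_{L²(0,T;L²(Γ_Y;L^∞(Ω)))}. -/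
open MeasureTheory

namespace FdeltaProof

/-- Continuous modification of the edge embedding (clamped to the edge). -/
noncomputable def embC (G : CellGraph) (e : G.E) (s : ℝ) : ℝ × ℝ :=
  G.emb e 0 + ∫ t in (0:ℝ)..(max 0 (min s (G.len e))), G.tang e t

lemma embC_eq (G : CellGraph) (e : G.E) {s : ℝ} (hs : s ∈ Set.Icc (0:ℝ) (G.len e)) :
    embC G e s = G.emb e s := by
  have h1 : max 0 (min s (G.len e)) = s := by
    rw [min_eq_left hs.2, max_eq_right hs.1]
  rw [embC, h1, ← G.emb_rep e s hs]

lemma embC_cont (G : CellGraph) (e : G.E) : Continuous (embC G e) := by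
  have hlen := (G.len_pos e).le
  have hint : MeasureTheory.IntegrableOn (G.tang e) (Set.uIcc (0:ℝ) (G.len e)) volume := by
    rw [Set.uIcc_of_le hlen, integrableOn_Icc_iff_integrableOn_Ioc]
    exact (G.tang_int e).1
  have hcont := intervalIntegral.continuousOn_primitive_interval hint
  have hclamp : Continuous fun s : ℝ => max 0 (min s (G.len e)) :=
    continuous_const.max (continuous_id.min continuous_const)
  have hmem : ∀ s : ℝ, max 0 (min s (G.len e)) ∈ Set.uIcc (0:ℝ) (G.len e) := by
    intro s
    rw [Set.uIcc_of_le hlen]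
    exact ⟨le_max_left _ _, max_le hlen (min_le_right _ _)⟩
  exact continuous_const.add (hcont.comp_continuous hclamp hmem)

end FdeltaProof

/-- Let `f ∈ L²(0,T; L²(Γ_Y; C(Ω̄)))` and set
`f^δ(t,x) = f(t, x, x/δ)` on `(0,T) × Γ^δ`, where `Γ^δ` is the union of the
scaled translated unit cells `δ(Γ_Y + (n₁, n₂))` filling
`Ω = [0,L₁] × [0,L₂]` (`L_i = N_i δ`). Then `f^δ ∈ L²(0,T; L²(Γ^δ))` and
`δ ‖f^δ‖²_{L²(0,T;L²(Γ^δ))} ≤ |Ω| ‖f‖²_{L²(0,T;L²(Γ_Y;L^∞(Ω)))}`. -/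
theorem fdelta_L2_bound (G : CellGraph) (T L₁ L₂ δ : ℝ) (hT : 0 < T) (hδ : 0 < δ)
    (N₁ N₂ : ℕ) (hN₁ : (N₁ : ℝ) * δ = L₁) (hN₂ : (N₂ : ℝ) * δ = L₂)
    (hemb : ∀ e : G.E, ∀ s ∈ Set.Icc (0:ℝ) (G.len e),
      G.emb e s ∈ Set.Icc (((0:ℝ), (0:ℝ)) : ℝ × ℝ) ((1:ℝ), (1:ℝ)))
    (f : ℝ → ℝ × ℝ → G.E → ℝ → ℝ)
    (hmeas : ∀ e, Measurable fun p : ℝ × (ℝ × ℝ) × ℝ => f p.1 p.2.1 e p.2.2)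
    (hcont : ∀ t e s, ContinuousOn (fun x => f t x e s)
      (Set.Icc (((0:ℝ), (0:ℝ)) : ℝ × ℝ) (L₁, L₂)))
    (hsup_int : ∀ t e, IntervalIntegrable
      (fun s => (sSup ((fun x => |f t x e s|) ''
        Set.Icc (((0:ℝ), (0:ℝ)) : ℝ × ℝ) (L₁, L₂)))^2)
      MeasureTheory.volume 0 (G.len e))
    (houter : IntervalIntegrable
      (fun t => ∑ e : G.E, ∫ s in (0:ℝ)..(G.len e),
        (sSup ((fun x => |f t x e s|) ''
          Set.Icc (((0:ℝ), (0:ℝ)) : ℝ × ℝ) (L₁, L₂)))^2)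
      MeasureTheory.volume 0 T) :
    -- `f^δ ∈ L²(0,T; L²(Γ^δ))` ...
    (∀ t, ∀ n₁ : Fin N₁, ∀ n₂ : Fin N₂, ∀ e : G.E,
      IntervalIntegrable
        (fun σ => (f t (δ • (G.emb e (σ / δ) + (((n₁:ℕ):ℝ), ((n₂:ℕ):ℝ)))) e (σ / δ))^2)
        MeasureTheory.volume 0 (δ * G.len e)) ∧
    IntervalIntegrable
      (fun t => ∑ n₁ : Fin N₁, ∑ n₂ : Fin N₂, ∑ e : G.E,
        ∫ σ in (0:ℝ)..(δ * G.len e),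
          (f t (δ • (G.emb e (σ / δ) + (((n₁:ℕ):ℝ), ((n₂:ℕ):ℝ)))) e (σ / δ))^2)
      MeasureTheory.volume 0 T ∧
    -- ... and the uniform bound holds:
    δ * ∫ t in (0:ℝ)..T, ∑ n₁ : Fin N₁, ∑ n₂ : Fin N₂, ∑ e : G.E,
        ∫ σ in (0:ℝ)..(δ * G.len e),
          (f t (δ • (G.emb e (σ / δ) + (((n₁:ℕ):ℝ), ((n₂:ℕ):ℝ)))) e (σ / δ))^2
      ≤ (L₁ * L₂) * ∫ t in (0:ℝ)..T, ∑ e : G.E, ∫ s in (0:ℝ)..(G.len e),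
          (sSup ((fun x => |f t x e s|) ''
            Set.Icc (((0:ℝ), (0:ℝ)) : ℝ × ℝ) (L₁, L₂)))^2 := by
  classical
  have hδ' : δ ≠ 0 := hδ.ne'
  have hL₁ : 0 ≤ L₁ := by rw [← hN₁]; positivity
  have hL₂ : 0 ≤ L₂ := by rw [← hN₂]; positivity
  set K : Set (ℝ × ℝ) := Set.Icc (((0:ℝ), (0:ℝ)) : ℝ × ℝ) (L₁, L₂) with hKdef
  set S : ℝ → G.E → ℝ → ℝ := fun t e s => sSup ((fun x => |f t x e s|) '' K) with hSdef
  have h00K : (((0:ℝ), (0:ℝ)) : ℝ × ℝ) ∈ K := by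
    rw [hKdef, Set.mem_Icc]
    exact ⟨le_refl _, ⟨hL₁, hL₂⟩⟩
  have hSbdd : ∀ t e s, BddAbove ((fun x => |f t x e s|) '' K) := fun t e s =>
    (isCompact_Icc.image_of_continuousOn (hcont t e s).abs).bddAbove
  have hSle : ∀ t e s, ∀ x ∈ K, |f t x e s| ≤ S t e s := fun t e s x hx =>
    le_csSup (hSbdd t e s) ⟨x, hx, rfl⟩
  have hsq : ∀ t e s, ∀ x ∈ K, (f t x e s)^2 ≤ (S t e s)^2 := by
    intro t e s x hx
    calc (f t x e s)^2 = |f t x e s|^2 := (sq_abs _).symm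
      _ ≤ (S t e s)^2 := pow_le_pow_left₀ (abs_nonneg _) (hSle t e s x hx) 2
  -- membership of scaled translated points in the box
  have hmemK : ∀ (n₁ : Fin N₁) (n₂ : Fin N₂) (e : G.E), ∀ s ∈ Set.Icc (0:ℝ) (G.len e),
      δ • (G.emb e s + ((((n₁:ℕ):ℝ), ((n₂:ℕ):ℝ)) : ℝ × ℝ)) ∈ K := by
    intro n₁ n₂ e s hs
    have hE := hemb e s hs
    rw [Set.mem_Icc, Prod.le_def, Prod.le_def] at hE
    obtain ⟨⟨e1, e2⟩, e3, e4⟩ := hE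
    have hn₁ : ((n₁:ℕ):ℝ) + 1 ≤ (N₁:ℝ) := by exact_mod_cast Nat.succ_le_of_lt n₁.2
    have hn₂ : ((n₂:ℕ):ℝ) + 1 ≤ (N₂:ℝ) := by exact_mod_cast Nat.succ_le_of_lt n₂.2
    have hn₁0 : (0:ℝ) ≤ ((n₁:ℕ):ℝ) := Nat.cast_nonneg _
    have hn₂0 : (0:ℝ) ≤ ((n₂:ℕ):ℝ) := Nat.cast_nonneg _
    rw [hKdef, Set.mem_Icc, Prod.le_def, Prod.le_def]
    simp only [Prod.smul_fst, Prod.smul_snd, Prod.fst_add, Prod.snd_add, smul_eq_mul]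
    have e1' : (0:ℝ) ≤ (G.emb e s).1 := e1
    have e2' : (0:ℝ) ≤ (G.emb e s).2 := e2
    have e3' : (G.emb e s).1 ≤ 1 := e3
    have e4' : (G.emb e s).2 ≤ 1 := e4
    refine ⟨⟨?_, ?_⟩, ?_, ?_⟩
    · positivity
    · positivity
    · rw [← hN₁, mul_comm (N₁:ℝ) δ]
      exact mul_le_mul_of_nonneg_left (by linarith) hδ.le
    · rw [← hN₂, mul_comm (N₂:ℝ) δ]
      exact mul_le_mul_of_nonneg_left (by linarith) hδ.le
  -- the key pointwise bound on each scaled edge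
  have hkey : ∀ t (n₁ : Fin N₁) (n₂ : Fin N₂) (e : G.E),
      ∀ σ ∈ Set.Icc (0:ℝ) (δ * G.len e),
      (f t (δ • (G.emb e (σ / δ) + (((n₁:ℕ):ℝ), ((n₂:ℕ):ℝ)))) e (σ / δ))^2
        ≤ (S t e (σ / δ))^2 := by
    intro t n₁ n₂ e σ hσ
    have hsd : σ / δ ∈ Set.Icc (0:ℝ) (G.len e) :=
      ⟨div_nonneg hσ.1 hδ.le, by rw [div_le_iff₀ hδ]; linarith [hσ.2, mul_comm δ (G.len e)]⟩
    exact hsq t e (σ / δ) _ (hmemK n₁ n₂ e (σ / δ) hsd)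
  have hlen : ∀ e : G.E, (0:ℝ) ≤ δ * G.len e :=
    fun e => mul_nonneg hδ.le (G.len_pos e).le
  -- integrability of the sup bound after scaling
  have hsupc : ∀ t e, IntervalIntegrable (fun σ => (S t e (σ / δ))^2) volume 0 (δ * G.len e) := by
    intro t e
    have h := (hsup_int t e).comp_mul_right (c := δ⁻¹)
    simp only [← div_eq_mul_inv] at h
    have h0 : (0:ℝ) / δ⁻¹ = 0 := by simp
    have h1 : G.len e / δ⁻¹ = δ * G.len e := by
      field_simp
    rw [h0, h1] at h
    exact h
  -- measurability of the (continuously modified) composed integrand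
  have hqCmeas : ∀ (n : ℝ × ℝ) (e : G.E),
      Measurable fun p : ℝ × ℝ =>
        (f p.1 (δ • (FdeltaProof.embC G e (p.2 / δ) + n)) e (p.2 / δ))^2 := by
    intro n e
    have hc1 : Continuous fun σ : ℝ => δ • (FdeltaProof.embC G e (σ / δ) + n) :=
      (((FdeltaProof.embC_cont G e).comp (continuous_id.div_const δ)).add
        continuous_const).const_smul δ
    have hmap : Measurable fun p : ℝ × ℝ =>
        ((p.1, (δ • (FdeltaProof.embC G e (p.2 / δ) + n), p.2 / δ)) : ℝ × (ℝ × ℝ) × ℝ) :=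
      measurable_fst.prodMk (((hc1.comp continuous_snd).measurable).prodMk
        (measurable_snd.div_const δ))
    exact ((hmeas e).comp hmap).pow_const 2
  -- the statement integrand equals its continuous modification on the interval
  have hqeq : ∀ t (n₁ : Fin N₁) (n₂ : Fin N₂) (e : G.E),
      ∀ σ ∈ Set.Icc (0:ℝ) (δ * G.len e),
      (f t (δ • (G.emb e (σ / δ) + (((n₁:ℕ):ℝ), ((n₂:ℕ):ℝ)))) e (σ / δ))^2
        = (f t (δ • (FdeltaProof.embC G e (σ / δ) + (((n₁:ℕ):ℝ), ((n₂:ℕ):ℝ)))) e (σ / δ))^2 := by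
    intro t n₁ n₂ e σ hσ
    have hsd : σ / δ ∈ Set.Icc (0:ℝ) (G.len e) :=
      ⟨div_nonneg hσ.1 hδ.le, by rw [div_le_iff₀ hδ]; linarith [hσ.2, mul_comm δ (G.len e)]⟩
    rw [FdeltaProof.embC_eq G e hsd]
  -- interval integrability of the statement integrand in σ
  have hqInt : ∀ t (n₁ : Fin N₁) (n₂ : Fin N₂) (e : G.E),
      IntervalIntegrable
        (fun σ => (f t (δ • (G.emb e (σ / δ) + (((n₁:ℕ):ℝ), ((n₂:ℕ):ℝ)))) e (σ / δ))^2)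
        volume 0 (δ * G.len e) := by
    intro t n₁ n₂ e
    rw [intervalIntegrable_iff_integrableOn_Ioc_of_le (hlen e)]
    have hae : ∀ᵐ σ ∂(volume.restrict (Set.Ioc (0:ℝ) (δ * G.len e))),
        (f t (δ • (FdeltaProof.embC G e (σ / δ) + (((n₁:ℕ):ℝ), ((n₂:ℕ):ℝ)))) e (σ / δ))^2
          = (f t (δ • (G.emb e (σ / δ) + (((n₁:ℕ):ℝ), ((n₂:ℕ):ℝ)))) e (σ / δ))^2 := by
      refine (ae_restrict_iff' measurableSet_Ioc).mpr (Filter.Eventually.of_forall ?_)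
      intro σ hσ
      exact (hqeq t n₁ n₂ e σ (Set.Ioc_subset_Icc_self hσ)).symm
    refine MeasureTheory.Integrable.mono'
      ((intervalIntegrable_iff_integrableOn_Ioc_of_le (hlen e)).mp (hsupc t e))
      ?_ ?_
    · refine AEStronglyMeasurable.congr ?_ hae
      have hm : Measurable fun σ : ℝ =>
          (f t (δ • (FdeltaProof.embC G e (σ / δ) + (((n₁:ℕ):ℝ), ((n₂:ℕ):ℝ)))) e (σ / δ))^2 := by
        have := (hqCmeas ((((n₁:ℕ):ℝ), ((n₂:ℕ):ℝ))) e).comp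
          ((measurable_const.prodMk measurable_id) : Measurable fun σ : ℝ => ((t, σ) : ℝ × ℝ))
        exact this
      exact hm.aestronglyMeasurable
    · refine (ae_restrict_iff' measurableSet_Ioc).mpr (Filter.Eventually.of_forall ?_)
      intro σ hσ
      rw [Real.norm_eq_abs, abs_of_nonneg (sq_nonneg _)]
      exact hkey t n₁ n₂ e σ (Set.Ioc_subset_Icc_self hσ)
  -- the single-edge integral bound
  have hIleq : ∀ t (n₁ : Fin N₁) (n₂ : Fin N₂) (e : G.E),
      (∫ σ in (0:ℝ)..(δ * G.len e),
        (f t (δ • (G.emb e (σ / δ) + (((n₁:ℕ):ℝ), ((n₂:ℕ):ℝ)))) e (σ / δ))^2)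
        ≤ δ * ∫ s in (0:ℝ)..(G.len e), (S t e s)^2 := by
    intro t n₁ n₂ e
    have h1 := intervalIntegral.integral_mono_on (hlen e) (hqInt t n₁ n₂ e) (hsupc t e)
      (hkey t n₁ n₂ e)
    have h2 : (∫ σ in (0:ℝ)..(δ * G.len e), (S t e (σ / δ))^2)
        = δ * ∫ s in (0:ℝ)..(G.len e), (S t e s)^2 := by
      rw [intervalIntegral.integral_comp_div (fun s => (S t e s)^2) hδ', smul_eq_mul,
        zero_div, mul_div_cancel_left₀ _ hδ']
    linarith
  have hInonneg : ∀ t (n₁ : Fin N₁) (n₂ : Fin N₂) (e : G.E),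
      (0:ℝ) ≤ ∫ σ in (0:ℝ)..(δ * G.len e),
        (f t (δ • (G.emb e (σ / δ) + (((n₁:ℕ):ℝ), ((n₂:ℕ):ℝ)))) e (σ / δ))^2 :=
    fun t n₁ n₂ e => intervalIntegral.integral_nonneg (hlen e) (fun σ _ => sq_nonneg _)
  have hRnonneg : ∀ t e, (0:ℝ) ≤ ∫ s in (0:ℝ)..(G.len e), (S t e s)^2 :=
    fun t e => intervalIntegral.integral_nonneg (G.len_pos e).le (fun s _ => sq_nonneg _)
  -- the summed bound in t
  have hIR : ∀ t,
      (∑ n₁ : Fin N₁, ∑ n₂ : Fin N₂, ∑ e : G.E,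
        ∫ σ in (0:ℝ)..(δ * G.len e),
          (f t (δ • (G.emb e (σ / δ) + (((n₁:ℕ):ℝ), ((n₂:ℕ):ℝ)))) e (σ / δ))^2)
        ≤ ((N₁:ℝ) * (N₂:ℝ) * δ) * ∑ e : G.E, ∫ s in (0:ℝ)..(G.len e), (S t e s)^2 := by
    intro t
    calc (∑ n₁ : Fin N₁, ∑ n₂ : Fin N₂, ∑ e : G.E,
          ∫ σ in (0:ℝ)..(δ * G.len e),
            (f t (δ • (G.emb e (σ / δ) + (((n₁:ℕ):ℝ), ((n₂:ℕ):ℝ)))) e (σ / δ))^2)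
        ≤ ∑ _n₁ : Fin N₁, ∑ _n₂ : Fin N₂, ∑ e : G.E,
            δ * ∫ s in (0:ℝ)..(G.len e), (S t e s)^2 :=
          Finset.sum_le_sum fun n₁ _ => Finset.sum_le_sum fun n₂ _ =>
            Finset.sum_le_sum fun e _ => hIleq t n₁ n₂ e
      _ = ((N₁:ℝ) * (N₂:ℝ) * δ) * ∑ e : G.E, ∫ s in (0:ℝ)..(G.len e), (S t e s)^2 := by
          rw [← Finset.mul_sum]
          simp [Finset.sum_const, Finset.card_univ, nsmul_eq_mul]
          ring
  -- strong measurability in t of the inner sum (via the continuous modification)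
  have hinner_eq : ∀ t (n₁ : Fin N₁) (n₂ : Fin N₂) (e : G.E),
      (∫ σ in (0:ℝ)..(δ * G.len e),
        (f t (δ • (G.emb e (σ / δ) + (((n₁:ℕ):ℝ), ((n₂:ℕ):ℝ)))) e (σ / δ))^2)
        = ∫ σ in (0:ℝ)..(δ * G.len e),
        (f t (δ • (FdeltaProof.embC G e (σ / δ) + (((n₁:ℕ):ℝ), ((n₂:ℕ):ℝ)))) e (σ / δ))^2 := by
    intro t n₁ n₂ e
    refine intervalIntegral.integral_congr ?_
    intro σ hσ
    rw [Set.uIcc_of_le (hlen e)] at hσ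
    exact hqeq t n₁ n₂ e σ hσ
  have hsmeas : AEStronglyMeasurable
      (fun t => ∑ n₁ : Fin N₁, ∑ n₂ : Fin N₂, ∑ e : G.E,
        ∫ σ in (0:ℝ)..(δ * G.len e),
          (f t (δ • (G.emb e (σ / δ) + (((n₁:ℕ):ℝ), ((n₂:ℕ):ℝ)))) e (σ / δ))^2)
      (volume.restrict (Set.Ioc (0:ℝ) T)) := by
    have hm : Measurable fun t => ∑ n₁ : Fin N₁, ∑ n₂ : Fin N₂, ∑ e : G.E,
        ∫ σ in (0:ℝ)..(δ * G.len e),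
          (f t (δ • (FdeltaProof.embC G e (σ / δ) + (((n₁:ℕ):ℝ), ((n₂:ℕ):ℝ)))) e (σ / δ))^2 := by
      refine Finset.measurable_sum _ fun n₁ _ => Finset.measurable_sum _ fun n₂ _ =>
        Finset.measurable_sum _ fun e _ => ?_
      have hsm := (hqCmeas ((((n₁:ℕ):ℝ), ((n₂:ℕ):ℝ))) e).stronglyMeasurable
      have := hsm.integral_prod_right' (ν := volume.restrict (Set.Ioc (0:ℝ) (δ * G.len e)))
      have heq : (fun t => ∫ σ in (0:ℝ)..(δ * G.len e),
          (f t (δ • (FdeltaProof.embC G e (σ / δ) + (((n₁:ℕ):ℝ), ((n₂:ℕ):ℝ)))) e (σ / δ))^2)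
          = fun t => ∫ σ in Set.Ioc (0:ℝ) (δ * G.len e),
          (f t (δ • (FdeltaProof.embC G e (σ / δ) + (((n₁:ℕ):ℝ), ((n₂:ℕ):ℝ)))) e (σ / δ))^2 := by
        funext t
        exact intervalIntegral.integral_of_le (hlen e)
      rw [heq]
      exact this.measurable
    have heq2 : (fun t => ∑ n₁ : Fin N₁, ∑ n₂ : Fin N₂, ∑ e : G.E,
        ∫ σ in (0:ℝ)..(δ * G.len e),
          (f t (δ • (G.emb e (σ / δ) + (((n₁:ℕ):ℝ), ((n₂:ℕ):ℝ)))) e (σ / δ))^2)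
        = fun t => ∑ n₁ : Fin N₁, ∑ n₂ : Fin N₂, ∑ e : G.E,
        ∫ σ in (0:ℝ)..(δ * G.len e),
          (f t (δ • (FdeltaProof.embC G e (σ / δ) + (((n₁:ℕ):ℝ), ((n₂:ℕ):ℝ)))) e (σ / δ))^2 := by
      funext t
      exact Finset.sum_congr rfl fun n₁ _ => Finset.sum_congr rfl fun n₂ _ =>
        Finset.sum_congr rfl fun e _ => hinner_eq t n₁ n₂ e
    rw [heq2]
    exact hm.aestronglyMeasurable
  -- interval integrability of the outer integrand in t
  have houter' : IntervalIntegrable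
      (fun t => ((N₁:ℝ) * (N₂:ℝ) * δ) * ∑ e : G.E, ∫ s in (0:ℝ)..(G.len e), (S t e s)^2)
      volume 0 T := houter.const_mul _
  have hIint : IntervalIntegrable
      (fun t => ∑ n₁ : Fin N₁, ∑ n₂ : Fin N₂, ∑ e : G.E,
        ∫ σ in (0:ℝ)..(δ * G.len e),
          (f t (δ • (G.emb e (σ / δ) + (((n₁:ℕ):ℝ), ((n₂:ℕ):ℝ)))) e (σ / δ))^2)
      volume 0 T := by
    rw [intervalIntegrable_iff_integrableOn_Ioc_of_le hT.le]
    refine MeasureTheory.Integrable.mono'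
      ((intervalIntegrable_iff_integrableOn_Ioc_of_le hT.le).mp houter') hsmeas ?_
    refine Filter.Eventually.of_forall ?_
    intro t
    rw [Real.norm_eq_abs, abs_of_nonneg]
    · exact hIR t
    · exact Finset.sum_nonneg fun n₁ _ => Finset.sum_nonneg fun n₂ _ =>
        Finset.sum_nonneg fun e _ => hInonneg t n₁ n₂ e
  refine ⟨hqInt, hIint, ?_⟩
  -- final inequality
  have hmono : (∫ t in (0:ℝ)..T, ∑ n₁ : Fin N₁, ∑ n₂ : Fin N₂, ∑ e : G.E,
        ∫ σ in (0:ℝ)..(δ * G.len e),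
          (f t (δ • (G.emb e (σ / δ) + (((n₁:ℕ):ℝ), ((n₂:ℕ):ℝ)))) e (σ / δ))^2)
      ≤ ∫ t in (0:ℝ)..T,
        ((N₁:ℝ) * (N₂:ℝ) * δ) * ∑ e : G.E, ∫ s in (0:ℝ)..(G.len e), (S t e s)^2 :=
    intervalIntegral.integral_mono_on hT.le hIint houter' (fun t _ => hIR t)
  have hconst : (∫ t in (0:ℝ)..T,
        ((N₁:ℝ) * (N₂:ℝ) * δ) * ∑ e : G.E, ∫ s in (0:ℝ)..(G.len e), (S t e s)^2)
      = ((N₁:ℝ) * (N₂:ℝ) * δ) *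
        ∫ t in (0:ℝ)..T, ∑ e : G.E, ∫ s in (0:ℝ)..(G.len e), (S t e s)^2 :=
    intervalIntegral.integral_const_mul _ _
  have hfin : δ * (((N₁:ℝ) * (N₂:ℝ) * δ) *
      ∫ t in (0:ℝ)..T, ∑ e : G.E, ∫ s in (0:ℝ)..(G.len e), (S t e s)^2)
      = (L₁ * L₂) * ∫ t in (0:ℝ)..T, ∑ e : G.E, ∫ s in (0:ℝ)..(G.len e), (S t e s)^2 := by
    rw [← hN₁, ← hN₂]; ring
  calc δ * ∫ t in (0:ℝ)..T, ∑ n₁ : Fin N₁, ∑ n₂ : Fin N₂, ∑ e : G.E,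
        ∫ σ in (0:ℝ)..(δ * G.len e),
          (f t (δ • (G.emb e (σ / δ) + (((n₁:ℕ):ℝ), ((n₂:ℕ):ℝ)))) e (σ / δ))^2
      ≤ δ * ∫ t in (0:ℝ)..T,
        ((N₁:ℝ) * (N₂:ℝ) * δ) * ∑ e : G.E, ∫ s in (0:ℝ)..(G.len e), (S t e s)^2 :=
        mul_le_mul_of_nonneg_left hmono hδ.le
    _ = (L₁ * L₂) * ∫ t in (0:ℝ)..T, ∑ e : G.E, ∫ s in (0:ℝ)..(G.len e), (S t e s)^2 := by
        rw [hconst, hfin]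
end

section
/- Let v ∈ H¹_0(Γ^δ) (H¹ functions on the finite mesh Γ^δ vanishing at all boundary points ∂Γ^δ) and let C be a circuit of the periodic unit graph Γ'_{Y,♯}. Then ∫_{Γ^δ} ∂_Γ v(x) χ_C(x/δ) ds(x) = 0. -/
open MeasureTheory

namespace CellGraph

variable (G : CellGraph)

/-- Embedded position of the endpoint of a dart where its traversal ends. -/
noncomputable def embHead (d : G.Dart) : ℝ × ℝ :=
  if d.2 then G.emb d.1 (G.len d.1) else G.emb d.1 0

/-- Embedded position of the endpoint of a dart where its traversal starts. -/
noncomputable def embTail (d : G.Dart) : ℝ × ℝ :=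
  if d.2 then G.emb d.1 0 else G.emb d.1 (G.len d.1)

/-- Position in `Ω` of the head endpoint of the copy of a dart in the cell
`n = (n₁, n₂)` of the mesh `Γ^δ`. -/
noncomputable def meshHeadPos (δ : ℝ) {N₁ N₂ : ℕ} (n : Fin N₁ × Fin N₂)
    (d : G.Dart) : ℝ × ℝ :=
  δ • (G.embHead d + (((n.1 : ℕ) : ℝ), ((n.2 : ℕ) : ℝ)))

/-- Value of a mesh function at the head endpoint of the copy of a dart in
the cell `n` of `Γ^δ` (edges of `Γ^δ` have length `δ·len e`). -/
def meshHeadVal (δ : ℝ) {N₁ N₂ : ℕ}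
    (v : Fin N₁ × Fin N₂ → G.E → ℝ → ℝ) (n : Fin N₁ × Fin N₂) (d : G.Dart) : ℝ :=
  if d.2 then v n d.1 (δ * G.len d.1) else v n d.1 0

end CellGraph

namespace MeshAux

open OrientedMetricGraph CellGraph

def shiftF (N : ℕ) (k : ℤ) (n : Fin N) : Fin N :=
  ⟨(((n : ℕ) : ℤ) + k % N).toNat % N, Nat.mod_lt _ n.pos⟩

lemma shiftF_coe (N : ℕ) (k : ℤ) (n : Fin N) :
    (((shiftF N k n : ℕ) : ℤ)) = (((n : ℕ) : ℤ) + k) % N := by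
  have hN : (0:ℤ) < N := by exact_mod_cast n.pos
  have h0 : 0 ≤ k % (N:ℤ) := Int.emod_nonneg _ (by omega)
  have h1 : (0:ℤ) ≤ ((n:ℕ):ℤ) + k % N := by positivity
  unfold shiftF
  push_cast [Int.toNat_of_nonneg h1]
  rw [Int.add_emod, Int.emod_emod_of_dvd _ dvd_rfl, ← Int.add_emod]

lemma shiftF_injective (N : ℕ) (k : ℤ) : Function.Injective (shiftF N k) := by
  intro a b h
  have hN : (0:ℤ) < N := by exact_mod_cast a.pos
  have ha := shiftF_coe N k a
  have hb := shiftF_coe N k b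
  rw [h, hb] at ha
  have hmod : (((a:ℕ):ℤ) + k) ≡ (((b:ℕ):ℤ) + k) [ZMOD (N:ℤ)] := ha.symm
  have h2 : (((a:ℕ):ℤ)) ≡ (((b:ℕ):ℤ)) [ZMOD (N:ℤ)] := Int.ModEq.add_right_cancel' k hmod
  have ha' : (((a:ℕ):ℤ)) % N = ((a:ℕ):ℤ) :=
    Int.emod_eq_of_lt (by positivity) (by exact_mod_cast a.isLt)
  have hb' : (((b:ℕ):ℤ)) % N = ((b:ℕ):ℤ) :=
    Int.emod_eq_of_lt (by positivity) (by exact_mod_cast b.isLt)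
  have h3 : ((a:ℕ):ℤ) = ((b:ℕ):ℤ) := by rw [← ha', ← hb']; exact h2
  exact Fin.ext (by exact_mod_cast h3)

/-- The key 1-d wrapping dichotomy. -/
lemma wrap1 {N : ℕ} {k : ℤ} {a b : ℝ} (ha : a ∈ Set.Icc (0:ℝ) 1)
    (hb : b ∈ Set.Icc (0:ℝ) 1) (hab : a = b + (k : ℝ)) (n : Fin N) :
    (b + ((shiftF N k n : ℕ) : ℝ) = a + ((n : ℕ) : ℝ)) ∨
    ((a + ((n:ℕ):ℝ) = 0 ∨ a + ((n:ℕ):ℝ) = (N:ℝ)) ∧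
     (b + ((shiftF N k n : ℕ):ℝ) = 0 ∨ b + ((shiftF N k n : ℕ):ℝ) = (N:ℝ))) := by
  set m := shiftF N k n with hm
  have hN : 0 < N := n.pos
  have hNZ : (0:ℤ) < N := by exact_mod_cast hN
  have hmc : ((m:ℕ):ℤ) = (((n:ℕ):ℤ) + k) % N := shiftF_coe N k n
  set t : ℤ := ((n:ℕ):ℤ) + k with ht
  have hnlt : (n:ℕ) < N := n.isLt
  have hmlt : (m:ℕ) < N := m.isLt
  -- t as a real: a + n = b + t
  have htR : a + ((n:ℕ):ℝ) = b + (t:ℝ) := by push_cast [ht]; rw [hab]; ring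
  have hdvd : (N:ℤ) ∣ t - ((m:ℕ):ℤ) := by
    rw [hmc]
    exact Int.ModEq.dvd (by unfold Int.ModEq; rw [Int.emod_emod_of_dvd _ dvd_rfl])
  rcases lt_trichotomy t 0 with hlt | heq | hgt
  · -- t < 0 : boundary case, t = -1, b = 1, m = N-1
    right
    have hteq : t ≤ -1 := by omega
    have h0 : a + ((n:ℕ):ℝ) = 0 := by
      have h1 : a + ((n:ℕ):ℝ) ≤ 0 := by
        rw [htR]
        have : (t:ℝ) ≤ -1 := by exact_mod_cast hteq
        linarith [hb.2]
      have h2 : 0 ≤ a + ((n:ℕ):ℝ) := by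
        have := ha.1
        have h3 : (0:ℝ) ≤ ((n:ℕ):ℝ) := Nat.cast_nonneg _
        linarith
      linarith
    refine ⟨Or.inl h0, Or.inr ?_⟩
    -- b + t = 0 in ℝ, so b ≤ 1 gives t = -1, b = 1
    have hbt : b + (t:ℝ) = 0 := by rw [← htR]; exact h0
    have htm1 : t = -1 := by
      have : (-1:ℝ) ≤ (t:ℝ) := by linarith [hb.2]
      have h3 : (-1:ℤ) ≤ t := by exact_mod_cast this
      omega
    have hb1 : b = 1 := by rw [htm1] at hbt; push_cast at hbt; linarith
    -- m = N - 1 : N ∣ (-1 - m) so N ∣ (m+1), 0 < m+1 ≤ N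
    have hdvd' : (N:ℤ) ∣ (((m:ℕ):ℤ) + 1) := by
      have := hdvd; rw [htm1] at this
      have h5 : (N:ℤ) ∣ -(-1 - ((m:ℕ):ℤ)) := this.neg_right
      simpa using h5
    have hle : (N:ℤ) ≤ ((m:ℕ):ℤ) + 1 := Int.le_of_dvd (by positivity) hdvd'
    have hmN : (m:ℕ) = N - 1 := by omega
    rw [hb1, hmN]
    have : ((N - 1 : ℕ) : ℝ) = (N:ℝ) - 1 := by
      have : (1:ℕ) ≤ N := hN
      push_cast [this]; ring
    rw [this]; ring
  · -- borderline t = 0 fits in the no-wrap case (0 ≤ t < N)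
    left
    have hmt : ((m:ℕ):ℤ) = t := by rw [hmc, heq]; simp
    have : ((m:ℕ):ℝ) = (t:ℝ) := by exact_mod_cast hmt
    rw [this, htR]
  · rcases lt_or_ge t (N:ℤ) with hltN | hgeN
    · -- 0 ≤ t < N : no wrap
      left
      have hmt : ((m:ℕ):ℤ) = t := by rw [hmc]; exact Int.emod_eq_of_lt (by omega) hltN
      have : ((m:ℕ):ℝ) = (t:ℝ) := by exact_mod_cast hmt
      rw [this, htR]
    · -- t ≥ N : boundary case, t = N, b = 0, m = 0
      right
      have hNt : a + ((n:ℕ):ℝ) = (N:ℝ) := by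
        have h1 : (N:ℝ) ≤ a + ((n:ℕ):ℝ) := by
          rw [htR]
          have : ((N:ℤ):ℝ) ≤ (t:ℝ) := by exact_mod_cast hgeN
          push_cast at this
          linarith [hb.1]
        have h2 : a + ((n:ℕ):ℝ) ≤ (N:ℝ) := by
          have hn1 : ((n:ℕ):ℝ) ≤ (N:ℝ) - 1 := by
            have : (n:ℕ) ≤ N - 1 := by omega
            have h4 : ((n:ℕ):ℝ) ≤ ((N-1 : ℕ):ℝ) := by exact_mod_cast this
            have h5 : ((N - 1 : ℕ) : ℝ) = (N:ℝ) - 1 := by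
              have : (1:ℕ) ≤ N := hN
              push_cast [this]; ring
            linarith [h4, h5.le]
          linarith [ha.2]
        linarith
      refine ⟨Or.inr hNt, Or.inl ?_⟩
      have hbt : b + (t:ℝ) = (N:ℝ) := by rw [← htR]; exact hNt
      have htN : t = (N:ℤ) := by
        have : (t:ℝ) ≤ (N:ℝ) := by linarith [hb.1]
        have h3 : t ≤ (N:ℤ) := by exact_mod_cast this
        omega
      have hb0 : b = 0 := by
        rw [htN] at hbt; push_cast at hbt; linarith
      -- m = 0
      have hdvd' : (N:ℤ) ∣ ((m:ℕ):ℤ) := by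
        have := hdvd; rw [htN] at this
        have h4 : (N:ℤ) ∣ ((N:ℤ) - ((m:ℕ):ℤ)) - N := dvd_sub this dvd_rfl
        simpa using h4.neg_right
      have hm0 : (m:ℕ) = 0 := by
        rcases Nat.eq_zero_or_pos (m:ℕ) with h | h
        · exact h
        · have := Int.le_of_dvd (by exact_mod_cast h) hdvd'
          omega
      rw [hb0, hm0]; simp

/-- Membership in the frontier of a rectangle. -/
lemma mem_frontier_rect {A B : ℝ} {p : ℝ × ℝ}
    (h1 : p.1 ∈ Set.Icc (0:ℝ) A) (h2 : p.2 ∈ Set.Icc (0:ℝ) B)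
    (h : p.1 = 0 ∨ p.1 = A ∨ p.2 = 0 ∨ p.2 = B) :
    p ∈ frontier (Set.Icc (((0:ℝ),(0:ℝ)) : ℝ × ℝ) (A, B)) := by
  rw [IsClosed.frontier_eq isClosed_Icc, Set.Icc_prod_eq, interior_prod_eq,
    interior_Icc, interior_Icc]
  refine ⟨⟨h1, h2⟩, ?_⟩
  rintro ⟨hp1, hp2⟩
  rcases h with h | h | h | h
  · exact absurd h (ne_of_gt hp1.1)
  · exact absurd h (ne_of_lt hp1.2)
  · exact absurd h (ne_of_gt hp2.1)
  · exact absurd h (ne_of_lt hp2.2)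

/-- The cyclic successor on `Fin L`. -/
def nextIdx {L : ℕ} (hL : 0 < L) (i : Fin L) : Fin L :=
  ⟨((i:ℕ) + 1) % L, Nat.mod_lt _ hL⟩

lemma nextIdx_val {L : ℕ} (hL : 0 < L) (i : Fin L) :
    ((nextIdx hL i : ℕ)) = if (i:ℕ) + 1 = L then 0 else (i:ℕ) + 1 := by
  unfold nextIdx
  split
  · simp [*, Nat.mod_self]
  · exact Nat.mod_eq_of_lt (by omega)

lemma nextIdx_injective {L : ℕ} (hL : 0 < L) : Function.Injective (nextIdx hL) := by
  intro a b h
  have ha := nextIdx_val hL a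
  have hb := nextIdx_val hL b
  rw [h, hb] at ha
  apply Fin.ext
  split at ha <;> split at ha <;> omega

lemma dartTail_eq_dartHead_not (G : OrientedMetricGraph) (d : G.Dart) :
    G.dartTail d = G.dartHead (d.1, !d.2) := by
  obtain ⟨e, b⟩ := d
  cases b <;> simp [OrientedMetricGraph.dartTail, OrientedMetricGraph.dartHead]

lemma embTail_eq_embHead_not (G : CellGraph) (d : G.Dart) :
    G.embTail d = G.embHead (d.1, !d.2) := by
  obtain ⟨e, b⟩ := d
  cases b <;> simp [CellGraph.embTail, CellGraph.embHead]

lemma embHead_mem (G : CellGraph)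
    (hemb : ∀ e : G.E, ∀ s ∈ Set.Icc (0:ℝ) (G.len e),
      G.emb e s ∈ Set.Icc (((0:ℝ), (0:ℝ)) : ℝ × ℝ) ((1:ℝ), (1:ℝ)))
    (d : G.Dart) :
    G.embHead d ∈ Set.Icc (((0:ℝ), (0:ℝ)) : ℝ × ℝ) ((1:ℝ), (1:ℝ)) := by
  obtain ⟨e, b⟩ := d
  cases b
  · simpa [CellGraph.embHead] using hemb e 0 ⟨le_refl _, (G.len_pos e).le⟩
  · simpa [CellGraph.embHead] using hemb e (G.len e) ⟨(G.len_pos e).le, le_refl _⟩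

lemma dart_step (G : CellGraph) {δ : ℝ} (hδ : 0 < δ) {N₁ N₂ : ℕ}
    (v v' : Fin N₁ × Fin N₂ → G.E → ℝ → ℝ)
    (hrep : ∀ n e, ∀ σ ∈ Set.Icc (0:ℝ) (δ * G.len e),
      v n e σ = v n e 0 + ∫ t in (0:ℝ)..σ, v' n e t)
    (n : Fin N₁ × Fin N₂) (d : G.Dart) :
    G.sign d * ∫ σ in (0:ℝ)..(δ * G.len d.1), v' n d.1 σ
      = G.meshHeadVal δ v n d - G.meshHeadVal δ v n (d.1, !d.2) := by
  obtain ⟨e, b⟩ := d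
  have hlen : (0:ℝ) ≤ δ * G.len e := (mul_pos hδ (G.len_pos e)).le
  have h := hrep n e (δ * G.len e) ⟨hlen, le_refl _⟩
  cases b <;> simp [OrientedMetricGraph.sign, CellGraph.meshHeadVal] <;> linarith

lemma pair_step (G : CellGraph)
    (hemb : ∀ e : G.E, ∀ s ∈ Set.Icc (0:ℝ) (G.len e),
      G.emb e s ∈ Set.Icc (((0:ℝ), (0:ℝ)) : ℝ × ℝ) ((1:ℝ), (1:ℝ)))
    {δ : ℝ} (hδ : 0 < δ) {N₁ N₂ : ℕ}
    (v : Fin N₁ × Fin N₂ → G.E → ℝ → ℝ)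
    (hconsist : ∀ (n₁ n₂ : Fin N₁ × Fin N₂) (d₁ d₂ : G.Dart),
      G.dartHead d₁ = G.dartHead d₂ →
      G.meshHeadPos δ n₁ d₁ = G.meshHeadPos δ n₂ d₂ →
      G.meshHeadVal δ v n₁ d₁ = G.meshHeadVal δ v n₂ d₂)
    (hbdry : ∀ (n : Fin N₁ × Fin N₂) (d : G.Dart),
      G.meshHeadPos δ n d ∈
        frontier (Set.Icc (((0:ℝ), (0:ℝ)) : ℝ × ℝ) (((N₁:ℝ) * δ, (N₂:ℝ) * δ))) →
      G.meshHeadVal δ v n d = 0)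
    (d d' : G.Dart) (hhead : G.dartHead d = G.dartTail d')
    (k : ℤ × ℤ) (hk : G.embHead d = G.embTail d' + (((k.1 : ℤ) : ℝ), ((k.2 : ℤ) : ℝ)))
    (n : Fin N₁ × Fin N₂) :
    G.meshHeadVal δ v n d
      = G.meshHeadVal δ v (shiftF N₁ k.1 n.1, shiftF N₂ k.2 n.2) (d'.1, !d'.2) := by
  set a := G.embHead d with ha_def
  set b := G.embTail d' with hb_def
  set m1 := shiftF N₁ k.1 n.1 with hm1
  set m2 := shiftF N₂ k.2 n.2 with hm2
  have ha : a ∈ Set.Icc (((0:ℝ), (0:ℝ)) : ℝ × ℝ) ((1:ℝ), (1:ℝ)) := embHead_mem G hemb d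
  have hb : b ∈ Set.Icc (((0:ℝ), (0:ℝ)) : ℝ × ℝ) ((1:ℝ), (1:ℝ)) := by
    rw [hb_def, embTail_eq_embHead_not]; exact embHead_mem G hemb _
  simp only [Set.mem_Icc, Prod.le_def] at ha hb
  have hk1 : a.1 = b.1 + ((k.1 : ℤ) : ℝ) := by rw [hk]; rfl
  have hk2 : a.2 = b.2 + ((k.2 : ℤ) : ℝ) := by rw [hk]; rfl
  have w1 := wrap1 (Set.mem_Icc.mpr ⟨ha.1.1, ha.2.1⟩)
    (Set.mem_Icc.mpr ⟨hb.1.1, hb.2.1⟩) hk1 n.1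
  have w2 := wrap1 (Set.mem_Icc.mpr ⟨ha.1.2, ha.2.2⟩)
    (Set.mem_Icc.mpr ⟨hb.1.2, hb.2.2⟩) hk2 n.2
  rw [← hm1] at w1
  rw [← hm2] at w2
  have hpair : ∀ (x : ℝ × ℝ) (c e : ℝ),
      δ • (x + (c, e)) = (δ * (x.1 + c), δ * (x.2 + e)) := by
    rintro ⟨x1, x2⟩ c e
    simp [Prod.mk_add_mk, Prod.smul_mk, smul_eq_mul]
  have hH : G.meshHeadPos δ n d
      = (δ * (a.1 + ((n.1 : ℕ) : ℝ)), δ * (a.2 + ((n.2 : ℕ) : ℝ))) := by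
    simp only [CellGraph.meshHeadPos, ← ha_def]
    exact hpair a _ _
  have hT : G.meshHeadPos δ (m1, m2) (d'.1, !d'.2)
      = (δ * (b.1 + ((m1 : ℕ) : ℝ)), δ * (b.2 + ((m2 : ℕ) : ℝ))) := by
    simp only [CellGraph.meshHeadPos, ← embTail_eq_embHead_not, ← hb_def]
    exact hpair b _ _
  have hrange : ∀ (x : ℝ) (M : ℕ) (j : Fin M), 0 ≤ x → x ≤ 1 →
      δ * (x + ((j : ℕ) : ℝ)) ∈ Set.Icc (0:ℝ) ((M:ℝ) * δ) := by
    intro x M j hx0 hx1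
    have hj0 : (0:ℝ) ≤ ((j : ℕ) : ℝ) := Nat.cast_nonneg _
    have hj : ((j : ℕ) : ℝ) ≤ (M : ℝ) - 1 := by
      have h1 : (j : ℕ) + 1 ≤ M := j.isLt
      have h2 : ((j : ℕ) : ℝ) + 1 ≤ (M : ℝ) := by exact_mod_cast h1
      linarith
    constructor
    · apply mul_nonneg hδ.le; linarith
    · have h3 : x + ((j : ℕ) : ℝ) ≤ (M : ℝ) := by linarith
      calc δ * (x + ((j : ℕ) : ℝ)) ≤ δ * (M : ℝ) :=
            mul_le_mul_of_nonneg_left h3 hδ.le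
        _ = (M : ℝ) * δ := mul_comm _ _
  have hboth : (((a.1 + ((n.1:ℕ):ℝ) = 0 ∨ a.1 + ((n.1:ℕ):ℝ) = (N₁:ℝ)) ∧
      (b.1 + ((m1:ℕ):ℝ) = 0 ∨ b.1 + ((m1:ℕ):ℝ) = (N₁:ℝ))) ∨
      ((a.2 + ((n.2:ℕ):ℝ) = 0 ∨ a.2 + ((n.2:ℕ):ℝ) = (N₂:ℝ)) ∧
      (b.2 + ((m2:ℕ):ℝ) = 0 ∨ b.2 + ((m2:ℕ):ℝ) = (N₂:ℝ)))) →
      G.meshHeadVal δ v n d = 0 ∧ G.meshHeadVal δ v (m1, m2) (d'.1, !d'.2) = 0 := by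
    intro hcase
    constructor
    · apply hbdry n d
      apply mem_frontier_rect
      · rw [hH]; exact hrange a.1 N₁ n.1 ha.1.1 ha.2.1
      · rw [hH]; exact hrange a.2 N₂ n.2 ha.1.2 ha.2.2
      · rcases hcase with ⟨h, -⟩ | ⟨h, -⟩
        · rcases h with h | h
          · left; rw [hH]; show δ * _ = 0; rw [h, mul_zero]
          · right; left; rw [hH]; show δ * _ = _; rw [h]; ring
        · rcases h with h | h
          · right; right; left; rw [hH]; show δ * _ = 0; rw [h, mul_zero]
          · right; right; right; rw [hH]; show δ * _ = _; rw [h]; ring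
    · apply hbdry (m1, m2) (d'.1, !d'.2)
      apply mem_frontier_rect
      · rw [hT]; exact hrange b.1 N₁ m1 hb.1.1 hb.2.1
      · rw [hT]; exact hrange b.2 N₂ m2 hb.1.2 hb.2.2
      · rcases hcase with ⟨-, h⟩ | ⟨-, h⟩
        · rcases h with h | h
          · left; rw [hT]; show δ * _ = 0; rw [h, mul_zero]
          · right; left; rw [hT]; show δ * _ = _; rw [h]; ring
        · rcases h with h | h
          · right; right; left; rw [hT]; show δ * _ = 0; rw [h, mul_zero]
          · right; right; right; rw [hT]; show δ * _ = _; rw [h]; ring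
  rcases w1 with w1 | w1
  · rcases w2 with w2 | w2
    · -- both coordinates match: use vertex consistency
      apply hconsist n (m1, m2) d (d'.1, !d'.2)
      · rw [hhead, dartTail_eq_dartHead_not]
      · rw [hH, hT, w1, w2]
    · obtain ⟨hz1, hz2⟩ := hboth (Or.inr w2)
      rw [hz1, hz2]
  · obtain ⟨hz1, hz2⟩ := hboth (Or.inl w1)
    rw [hz1, hz2]

end MeshAux


/-- Let `v ∈ H¹₀(Γ^δ)` (an `H¹` function on the mesh `Γ^δ`
filling `Ω = [0, N₁δ] × [0, N₂δ]`, vanishing at all boundary points of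
`Γ^δ` on `∂Ω`), and let `C` be a circuit of the periodic unit graph
`Γ'_{Y,♯}`. Then `∫_{Γ^δ} ∂_Γ v(x) χ_C(x/δ) ds(x) = 0`. -/
theorem mesh_circuit_integral_eq_zero (G : CellGraph)
    (hemb : ∀ e : G.E, ∀ s ∈ Set.Icc (0:ℝ) (G.len e),
      G.emb e s ∈ Set.Icc (((0:ℝ), (0:ℝ)) : ℝ × ℝ) ((1:ℝ), (1:ℝ)))
    (δ : ℝ) (hδ : 0 < δ) (N₁ N₂ : ℕ)
    (v v' : Fin N₁ × Fin N₂ → G.E → ℝ → ℝ)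
    (hrep : ∀ n e, ∀ σ ∈ Set.Icc (0:ℝ) (δ * G.len e),
      v n e σ = v n e 0 + ∫ t in (0:ℝ)..σ, v' n e t)
    (hint : ∀ n e, IntervalIntegrable (v' n e) MeasureTheory.volume 0 (δ * G.len e))
    -- `v` is continuous on the mesh: endpoint values agree at every common
    -- mesh point (same periodic vertex and same position in `Ω`).
    (hconsist : ∀ (n₁ n₂ : Fin N₁ × Fin N₂) (d₁ d₂ : G.Dart),
      G.dartHead d₁ = G.dartHead d₂ →
      G.meshHeadPos δ n₁ d₁ = G.meshHeadPos δ n₂ d₂ →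
      G.meshHeadVal δ v n₁ d₁ = G.meshHeadVal δ v n₂ d₂)
    -- `v` vanishes at the boundary points `∂Γ^δ = Γ^δ ∩ ∂Ω`.
    (hbdry : ∀ (n : Fin N₁ × Fin N₂) (d : G.Dart),
      G.meshHeadPos δ n d ∈
        frontier (Set.Icc (((0:ℝ), (0:ℝ)) : ℝ × ℝ) (((N₁:ℝ) * δ, (N₂:ℝ) * δ))) →
      G.meshHeadVal δ v n d = 0)
    (C : List G.Dart) (hC : G.IsCircuit C)
    -- `C` is a circuit of the *periodic* graph: embedded endpoints of
    -- consecutive darts agree up to integer translations.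
    (hgeo : C.Chain' (fun d₁ d₂ => ∃ k : ℤ × ℤ,
      G.embHead d₁ = G.embTail d₂ + (((k.1 : ℤ) : ℝ), ((k.2 : ℤ) : ℝ))))
    (hgeoclose : ∀ dl ∈ C.getLast?, ∀ df ∈ C.head?, ∃ k : ℤ × ℤ,
      G.embHead dl = G.embTail df + (((k.1 : ℤ) : ℝ), ((k.2 : ℤ) : ℝ))) :
    ∑ n : Fin N₁ × Fin N₂,
      (C.map fun d =>
        G.sign d * ∫ σ in (0:ℝ)..(δ * G.len d.1), v' n d.1 σ).sum = 0 := by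
  classical
  obtain ⟨⟨hCne, hchain, -⟩, hclose⟩ := hC
  have hL : 0 < C.length := List.length_pos_iff.mpr hCne
  set H : (Fin N₁ × Fin N₂) → G.Dart → ℝ := fun n d => G.meshHeadVal δ v n d with hHdef
  set T : (Fin N₁ × Fin N₂) → G.Dart → ℝ := fun n d => G.meshHeadVal δ v n (d.1, !d.2)
    with hTdef
  have hlist : ∀ n : Fin N₁ × Fin N₂,
      (C.map fun d => G.sign d * ∫ σ in (0:ℝ)..(δ * G.len d.1), v' n d.1 σ).sum
        = ∑ i : Fin C.length, (H n (C.get i) - T n (C.get i)) := by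
    intro n
    rw [← Fin.sum_univ_fun_getElem]
    refine Finset.sum_congr rfl fun i _ => ?_
    rw [show C[(i:ℕ)] = C.get i from rfl]
    exact MeshAux.dart_step G hδ v v' hrep n (C.get i)
  have key : ∀ i : Fin C.length,
      (∑ n : Fin N₁ × Fin N₂, H n (C.get i))
        = ∑ n : Fin N₁ × Fin N₂, T n (C.get (MeshAux.nextIdx hL i)) := by
    intro i
    -- extract adjacency and geometric data for the consecutive pair
    have hpair : G.dartHead (C.get i) = G.dartTail (C.get (MeshAux.nextIdx hL i)) ∧
        ∃ k : ℤ × ℤ, G.embHead (C.get i)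
          = G.embTail (C.get (MeshAux.nextIdx hL i)) + (((k.1 : ℤ) : ℝ), ((k.2 : ℤ) : ℝ)) := by
      by_cases hi : (i : ℕ) + 1 < C.length
      · have hnext : C.get (MeshAux.nextIdx hL i) = C.get ⟨(i : ℕ) + 1, hi⟩ := by
          congr 1
          apply Fin.ext
          rw [MeshAux.nextIdx_val]
          show _ = (i : ℕ) + 1
          split <;> omega
        have h1 := (List.isChain_iff_getElem.mp hchain) (i : ℕ) (by omega)
        have h2 := (List.isChain_iff_getElem.mp hgeo) (i : ℕ) (by omega)
        rw [hnext]
        exact ⟨h1, h2⟩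
      · have hiL : (i : ℕ) + 1 = C.length := by omega
        have hd : C.get i = C.getLast hCne := by
          have he : C.get i = C.get ⟨C.length - 1, by omega⟩ := by
            congr 1
            apply Fin.ext
            show (i : ℕ) = C.length - 1
            omega
          rw [he, List.get_length_sub_one]
        have hd' : C.get (MeshAux.nextIdx hL i) = C.head hCne := by
          have h0 : ((MeshAux.nextIdx hL i : Fin C.length) : ℕ) = 0 := by
            rw [MeshAux.nextIdx_val]; simp [hiL]
          have he : C.get (MeshAux.nextIdx hL i) = C.get ⟨0, hL⟩ := by
            congr 1; exact Fin.ext h0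
          rw [he, List.get_mk_zero]
        have hmemL : C.getLast hCne ∈ C.getLast? := by
          rw [List.getLast?_eq_getLast hCne]; rfl
        have hmemH : C.head hCne ∈ C.head? := by
          rw [List.head?_eq_head hCne]; rfl
        rw [hd, hd']
        exact ⟨hclose _ hmemL _ hmemH, hgeoclose _ hmemL _ hmemH⟩
    obtain ⟨hhead, k, hk⟩ := hpair
    have hbij : Function.Bijective
        (fun p : Fin N₁ × Fin N₂ =>
          ((MeshAux.shiftF N₁ k.1 p.1, MeshAux.shiftF N₂ k.2 p.2) : Fin N₁ × Fin N₂)) := by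
      rw [← Finite.injective_iff_bijective]
      intro x y hxy
      exact Prod.ext (MeshAux.shiftF_injective N₁ k.1 (congrArg Prod.fst hxy))
        (MeshAux.shiftF_injective N₂ k.2 (congrArg Prod.snd hxy))
    calc (∑ n : Fin N₁ × Fin N₂, H n (C.get i))
        = ∑ n : Fin N₁ × Fin N₂,
            T (MeshAux.shiftF N₁ k.1 n.1, MeshAux.shiftF N₂ k.2 n.2)
              (C.get (MeshAux.nextIdx hL i)) :=
          Finset.sum_congr rfl fun n _ =>
            MeshAux.pair_step G hemb hδ v hconsist hbdry _ _ hhead k hk n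
      _ = ∑ n : Fin N₁ × Fin N₂, T n (C.get (MeshAux.nextIdx hL i)) :=
          hbij.sum_comp (fun p => T p (C.get (MeshAux.nextIdx hL i)))
  calc ∑ n : Fin N₁ × Fin N₂,
      (C.map fun d => G.sign d * ∫ σ in (0:ℝ)..(δ * G.len d.1), v' n d.1 σ).sum
      = ∑ n : Fin N₁ × Fin N₂, ∑ i : Fin C.length, (H n (C.get i) - T n (C.get i)) :=
        Finset.sum_congr rfl fun n _ => hlist n
    _ = ∑ i : Fin C.length, ∑ n : Fin N₁ × Fin N₂, (H n (C.get i) - T n (C.get i)) :=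
        Finset.sum_comm
    _ = (∑ i : Fin C.length, ∑ n : Fin N₁ × Fin N₂, H n (C.get i))
        - ∑ i : Fin C.length, ∑ n : Fin N₁ × Fin N₂, T n (C.get i) := by
        simp only [Finset.sum_sub_distrib]
    _ = 0 := by
        have hstep : (∑ i : Fin C.length, ∑ n : Fin N₁ × Fin N₂, H n (C.get i))
            = ∑ i : Fin C.length, ∑ n : Fin N₁ × Fin N₂, T n (C.get i) := by
          calc (∑ i : Fin C.length, ∑ n : Fin N₁ × Fin N₂, H n (C.get i))
              = ∑ i : Fin C.length, ∑ n : Fin N₁ × Fin N₂,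
                  T n (C.get (MeshAux.nextIdx hL i)) :=
                Finset.sum_congr rfl fun i _ => key i
            _ = ∑ i : Fin C.length, ∑ n : Fin N₁ × Fin N₂, T n (C.get i) :=
                Function.Bijective.sum_comp
                  ((Finite.injective_iff_bijective).mp (MeshAux.nextIdx_injective hL))
                  (fun j => ∑ n : Fin N₁ × Fin N₂, T n (C.get j))
        rw [hstep, sub_self]
end
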